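/- arXiv:2009.10857 — 7 statements merged into one kernel-verified Lean document; each statement's English description precedes it below -/
import Mathlib

section
/- Each standard basis vector e_m is an exposed point of the unit ball K_N = {x ∈ R^N : δ(x) ≤ 1} of the Schinzel norm: the linear functional φ_m(x) = (1/2)(Σ_n x_n + x_m) satisfies φ_m(x) ≤ δ(x) for all x, with equality if and only if x = t e_m for some t ≥ 0. -/
open Finset in
/-- The Schinzel norm `δ(x) = max{Σ xₘ⁺, Σ xₙ⁻}` on `ℝ^N`. -/
noncomputable def schinzelDelta {N : ℕ} (x : Fin N → ℝ) : ℝ :=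
  max (∑ m, max (x m) 0) (∑ n, max (-(x n)) 0)

/-- The set `E_N = {±e_m}` of signed standard basis vectors. -/
def schE (N : ℕ) : Set (Fin N → ℝ) :=
  {x | ∃ m, x = Pi.single m 1 ∨ x = -Pi.single m 1}

/-- The set `F_N = {e_m − e_n : m ≠ n}`. -/
def schF (N : ℕ) : Set (Fin N → ℝ) :=
  {x | ∃ m n, m ≠ n ∧ x = Pi.single m 1 - Pi.single n 1}

open Finset in
/-- The `ℓ¹`-norm of the exterior product `x₁ ∧ ⋯ ∧ x_L`: the sum, over all
`L`-element subsets `I ⊆ {1,…,N}`, of the absolute values of the `L×L` minors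
(rows indexed by `I`) of the `N×L` matrix with columns `x₁,…,x_L`. -/
noncomputable def wedgeL1 {N L : ℕ} (x : Fin L → Fin N → ℝ) : ℝ :=
  ∑ I : Finset (Fin N), if h : I.card = L then
    |(Matrix.of fun i j => x j ((I.orderIsoOfFin h i : Fin N))).det| else 0


open Finset in
lemma sch_aux {N : ℕ} (x : Fin N → ℝ) :
    ∑ n, x n = (∑ n, max (x n) 0) - ∑ n, max (-(x n)) 0 := by
  rw [← Finset.sum_sub_distrib]
  apply Finset.sum_congr rfl
  intro n _
  rcases le_total 0 (x n) with h | h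
  · rw [max_eq_left h, max_eq_right (by linarith)]; ring
  · rw [max_eq_right h, max_eq_left (by linarith)]; ring

open Finset in
/-- Each standard basis vector `e_m` is an exposed point of the Schinzel unit ball:
`φ_m(x) = ½(Σ xₙ + x_m)` satisfies `φ_m(x) ≤ δ(x)`, with equality iff `x = t e_m`, `t ≥ 0`. -/
theorem stmt2 (N : ℕ) (m : Fin N) :
    (∀ x : Fin N → ℝ, (1/2) * ((∑ n, x n) + x m) ≤ schinzelDelta x) ∧
    (∀ x : Fin N → ℝ, (1/2) * ((∑ n, x n) + x m) = schinzelDelta x ↔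
      ∃ t : ℝ, 0 ≤ t ∧ x = t • (Pi.single m 1 : Fin N → ℝ)) := by
  have key : ∀ x : Fin N → ℝ,
      x m ≤ ∑ n, max (x n) 0 ∧ 0 ≤ ∑ n, max (-(x n)) 0 := by
    intro x
    constructor
    · calc x m ≤ max (x m) 0 := le_max_left _ _
        _ ≤ ∑ n, max (x n) 0 :=
          Finset.single_le_sum (f := fun n => max (x n) 0) (fun n _ => le_max_right _ _) (Finset.mem_univ m)
    · exact Finset.sum_nonneg fun n _ => le_max_right _ _
  constructor
  · intro x
    obtain ⟨h1, h2⟩ := key x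
    have h3 := le_max_left (∑ n, max (x n) 0) (∑ n, max (-(x n)) 0)
    rw [sch_aux x]
    unfold schinzelDelta
    linarith
  · intro x
    constructor
    · intro heq
      obtain ⟨h1, h2⟩ := key x
      rw [sch_aux x] at heq
      unfold schinzelDelta at heq
      have hM : ∑ n, max (-(x n)) 0 = 0 ∧ x m = ∑ n, max (x n) 0 := by
        rcases max_cases (∑ n, max (x n) 0) (∑ n, max (-(x n)) 0) with ⟨he, hle⟩ | ⟨he, hlt⟩ <;>
          rw [he] at heq <;> constructor <;> linarith
      obtain ⟨hM0, hxm⟩ := hM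
      have hnn : ∀ n, 0 ≤ x n := by
        intro n
        have := (Finset.sum_eq_zero_iff_of_nonneg
          (fun n _ => le_max_right (-(x n)) 0)).mp hM0 n (Finset.mem_univ n)
        have := le_max_left (-(x n)) 0
        linarith
      have hP : ∑ n, max (x n) 0 = ∑ n, x n :=
        Finset.sum_congr rfl fun n _ => max_eq_left (hnn n)
      rw [hP] at hxm
      have hz : ∀ n, n ≠ m → x n = 0 := by
        intro n hn
        have hsum : ∑ k ∈ Finset.univ.erase m, x k = 0 := by
          have := Finset.add_sum_erase Finset.univ x (Finset.mem_univ m)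
          linarith
        exact (Finset.sum_eq_zero_iff_of_nonneg (fun k _ => hnn k)).mp hsum n
          (Finset.mem_erase.mpr ⟨hn, Finset.mem_univ n⟩)
      refine ⟨x m, hnn m, ?_⟩
      funext n
      by_cases h : n = m
      · subst h; simp
      · simp [Pi.single_apply, h, hz n h]
    · rintro ⟨t, ht, rfl⟩
      have hx : ∀ n, (t • (Pi.single m 1 : Fin N → ℝ)) n = (Pi.single m t : Fin N → ℝ) n := by
        intro n; by_cases h : n = m <;> simp [Pi.single_apply, h]
      have hP : ∑ n, max ((t • (Pi.single m 1 : Fin N → ℝ)) n) 0 = t := by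
        have : ∀ n, max ((t • (Pi.single m 1 : Fin N → ℝ)) n) 0 = (Pi.single m t : Fin N → ℝ) n := by
          intro n; rw [hx n]; by_cases h : n = m <;> simp [Pi.single_apply, h, max_eq_left ht]
        simp only [this]; exact Finset.sum_pi_single' m t Finset.univ ▸ by simp
      have hM : ∑ n, max (-((t • (Pi.single m 1 : Fin N → ℝ)) n)) 0 = 0 := by
        apply Finset.sum_eq_zero
        intro n _
        rw [hx n]; by_cases h : n = m <;> simp [Pi.single_apply, h, max_eq_right (by linarith : -t ≤ 0)]
      have hS : ∑ n, (t • (Pi.single m 1 : Fin N → ℝ)) n = t := by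
        simp only [hx]; exact Finset.sum_pi_single' m t Finset.univ ▸ by simp
      unfold schinzelDelta
      rw [hP, hM, hS]
      simp [max_eq_left ht]
      ring
end

section
/- Every point x on the boundary of the unit ball K_N of the Schinzel norm (i.e., with δ(x) = 1) is a convex combination of points from E_N ∪ F_N, where E_N = {±e_m : 1 ≤ m ≤ N} and F_N = {e_m − e_n : m ≠ n}. Explicitly, with σ^+ = Σ x_m^+ and σ^- = Σ x_n^-, x = (1−σ^-) Σ_m x_m^+ e_m + (1−σ^+) Σ_n x_n^- (−e_n) + Σ_{m≠n} x_m^+ x_n^- (e_m − e_n), and the coefficients are nonnegative and sum to 1. -/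
open Finset in
/-- Every point on the boundary of the Schinzel unit ball is the stated explicit convex
combination of points of `E_N ∪ F_N`; the coefficients are nonnegative and sum to `1`. -/
theorem stmt4 (N : ℕ) (x : Fin N → ℝ) (hx : schinzelDelta x = 1) :
    x = (1 - ∑ n, max (-(x n)) 0) • (∑ m, max (x m) 0 • (Pi.single m 1 : Fin N → ℝ))
      + (1 - ∑ m, max (x m) 0) • (∑ n, max (-(x n)) 0 • (-(Pi.single n 1 : Fin N → ℝ)))
      + ∑ m, ∑ n ∈ Finset.univ \ {m}, (max (x m) 0 * max (-(x n)) 0) •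
          ((Pi.single m 1 : Fin N → ℝ) - Pi.single n 1)
    ∧ 0 ≤ 1 - ∑ n, max (-(x n)) 0
    ∧ 0 ≤ 1 - ∑ m, max (x m) 0
    ∧ (1 - ∑ n, max (-(x n)) 0) * (∑ m, max (x m) 0)
      + (1 - ∑ m, max (x m) 0) * (∑ n, max (-(x n)) 0)
      + ∑ m, ∑ n ∈ Finset.univ \ {m}, max (x m) 0 * max (-(x n)) 0 = 1 := by
  have hpq : ∀ m : Fin N, max (x m) 0 * max (-(x m)) 0 = 0 := by
    intro m
    rcases le_total (x m) 0 with h | h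
    · rw [max_eq_right h, zero_mul]
    · rw [max_eq_right (neg_nonpos.mpr h), mul_zero]
  have hA : (∑ m, max (x m) 0) ≤ 1 := hx ▸ le_max_left _ _
  have hB : (∑ n, max (-(x n)) 0) ≤ 1 := hx ▸ le_max_right _ _
  have hcase : (∑ m, max (x m) 0) = 1 ∨ (∑ n, max (-(x n)) 0) = 1 := by
    rcases max_choice (∑ m, max (x m) 0) (∑ n, max (-(x n)) 0) with h | h
    · left; rw [← h]; exact hx
    · right; rw [← h]; exact hx
  -- extend inner sums to all of univ (the missing term vanishes)
  have hinnerV : ∀ m : Fin N, (∑ n ∈ Finset.univ \ {m}, (max (x m) 0 * max (-(x n)) 0) •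
        ((Pi.single m 1 : Fin N → ℝ) - Pi.single n 1))
      = ∑ n, (max (x m) 0 * max (-(x n)) 0) •
        ((Pi.single m 1 : Fin N → ℝ) - Pi.single n 1) := by
    intro m
    refine Finset.sum_subset Finset.sdiff_subset ?_
    intro n _ hn
    have : n = m := by simpa using hn
    subst this; simp
  have hinnerS : ∀ m : Fin N, (∑ n ∈ Finset.univ \ {m}, max (x m) 0 * max (-(x n)) 0)
      = max (x m) 0 * ∑ n, max (-(x n)) 0 := by
    intro m
    rw [Finset.mul_sum]
    refine Finset.sum_subset Finset.sdiff_subset ?_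
    intro n _ hn
    have : n = m := by simpa using hn
    rw [this, hpq]
  refine ⟨?_, by linarith, by linarith, ?_⟩
  · funext i
    simp only [hinnerV]
    have hdbl : ((∑ m, ∑ n, (max (x m) 0 * max (-(x n)) 0) •
        ((Pi.single m 1 : Fin N → ℝ) - Pi.single n 1) : Fin N → ℝ) i)
      = (max (x i) 0) * (∑ n, max (-(x n)) 0) - (∑ m, max (x m) 0) * max (-(x i)) 0 := by
      simp only [Finset.sum_apply, Pi.smul_apply, Pi.sub_apply, Pi.single_apply, smul_eq_mul,
        mul_sub, Finset.sum_sub_distrib, mul_ite, mul_one, mul_zero]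
      rw [Finset.sum_comm (f := fun m n => if i = n then (x m ⊔ 0) * (-x n ⊔ 0) else 0)]
      simp [Finset.sum_ite_eq', ← Finset.sum_mul, ← Finset.mul_sum]
    simp only [Pi.add_apply, hdbl, Pi.smul_apply, Finset.sum_apply, Pi.neg_apply,
      Pi.single_apply, smul_eq_mul, mul_ite, mul_one, mul_zero, mul_neg,
      Finset.sum_ite_eq', Finset.sum_ite_eq, Finset.mem_univ, if_true, Finset.sum_neg_distrib]
    have hxi : x i = max (x i) 0 - max (-(x i)) 0 := by
      rcases le_total (x i) 0 with h | h
      · rw [max_eq_right h, max_eq_left (neg_nonneg.mpr h)]; ring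
      · rw [max_eq_left h, max_eq_right (neg_nonpos.mpr h)]; ring
    linear_combination hxi
  · simp only [hinnerS, ← Finset.sum_mul]
    rcases hcase with h | h <;> rw [h] <;> ring
end

section
/- The set of extreme points of the unit ball K_N = {x ∈ R^N : δ(x) ≤ 1} of the Schinzel norm is exactly E_N ∪ F_N = {±e_m : 1 ≤ m ≤ N} ∪ {e_m − e_n : m ≠ n}. In particular, K_N has exactly N^2 + N extreme points. -/
open Finset

noncomputable def pos' {N : ℕ} (x : Fin N → ℝ) : ℝ := ∑ m, max (x m) 0

lemma pos'_nonneg {N : ℕ} (x : Fin N → ℝ) : 0 ≤ pos' x :=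
  Finset.sum_nonneg fun i _ => le_max_right _ _

lemma delta_le_iff {N : ℕ} (x : Fin N → ℝ) :
    schinzelDelta x ≤ 1 ↔ pos' x ≤ 1 ∧ pos' (-x) ≤ 1 := by
  simp only [schinzelDelta, pos', max_le_iff, Pi.neg_apply]

lemma pos'_add_single {N : ℕ} (x : Fin N → ℝ) (i : Fin N) (t : ℝ) :
    pos' (x + t • (Pi.single i 1 : Fin N → ℝ)) = pos' x + (max (x i + t) 0 - max (x i) 0) := by
  have h : ∀ k, (x + t • (Pi.single i 1 : Fin N → ℝ)) k = x k + t * (if k = i then 1 else 0) := by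
    intro k; simp [Pi.single_apply]
  unfold pos'
  rw [← Finset.sum_erase_add _ _ (Finset.mem_univ i),
      ← Finset.sum_erase_add _ (fun m => max (x m) 0) (Finset.mem_univ i)]
  have h2 : ∀ k ∈ Finset.univ.erase i,
      max ((x + t • (Pi.single i 1 : Fin N → ℝ)) k) 0 = max (x k) 0 := by
    intro k hk
    rw [h k, if_neg (Finset.mem_erase.1 hk).1, mul_zero, add_zero]
  rw [Finset.sum_congr rfl h2, h i, if_pos rfl, mul_one]
  ring

lemma pos'_neg_add {N : ℕ} (x : Fin N → ℝ) (i : Fin N) (t : ℝ) :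
    pos' (-(x + t • (Pi.single i 1 : Fin N → ℝ)))
      = pos' (-x) + (max (-(x i) - t) 0 - max (-(x i)) 0) := by
  have e : -(x + t • (Pi.single i 1 : Fin N → ℝ))
      = (-x) + (-t) • (Pi.single i 1 : Fin N → ℝ) := by module
  rw [e, pos'_add_single]
  have : (-x) i = -(x i) := rfl
  rw [this]; ring_nf

lemma pos'_zero {N : ℕ} : pos' (0 : Fin N → ℝ) = 0 := by simp [pos']

lemma pos'_single {N : ℕ} (m : Fin N) : pos' (Pi.single m 1 : Fin N → ℝ) = 1 := by
  have h := pos'_add_single (0 : Fin N → ℝ) m 1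
  rw [zero_add, one_smul] at h
  rw [h, pos'_zero]; norm_num

lemma pos'_neg_single {N : ℕ} (m : Fin N) :
    pos' (-(Pi.single m 1 : Fin N → ℝ)) = 0 := by
  have h := pos'_neg_add (0 : Fin N → ℝ) m 1
  rw [zero_add, one_smul] at h
  rw [h]; simp [pos'_zero, pos']

lemma single_apply_ne {N : ℕ} {m n : Fin N} (h : m ≠ n) :
    (Pi.single m 1 : Fin N → ℝ) n = 0 := Pi.single_eq_of_ne h.symm 1

lemma pos'_pair {N : ℕ} {m n : Fin N} (h : m ≠ n) :
    pos' ((Pi.single m 1 : Fin N → ℝ) - Pi.single n 1) = 1 := by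
  have e : (Pi.single m 1 : Fin N → ℝ) - Pi.single n 1
      = (Pi.single m 1 : Fin N → ℝ) + (-1 : ℝ) • (Pi.single n 1 : Fin N → ℝ) := by module
  have h2 := pos'_add_single (Pi.single m 1 : Fin N → ℝ) n (-1)
  rw [e, h2, pos'_single, single_apply_ne h]
  norm_num

lemma delta_single {N : ℕ} (m : Fin N) :
    schinzelDelta (Pi.single m 1 : Fin N → ℝ) ≤ 1 := by
  rw [delta_le_iff, pos'_single, pos'_neg_single]; norm_num

lemma delta_neg' {N : ℕ} (x : Fin N → ℝ) : schinzelDelta (-x) = schinzelDelta x := by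
  have h1 : schinzelDelta x = max (pos' x) (pos' (-x)) := rfl
  have h2 : schinzelDelta (-x) = max (pos' (-x)) (pos' (-(-x))) := rfl
  rw [h1, h2, neg_neg, max_comm]

lemma delta_neg_single {N : ℕ} (m : Fin N) :
    schinzelDelta (-(Pi.single m 1 : Fin N → ℝ)) ≤ 1 := by
  rw [delta_neg']; exact delta_single m

lemma delta_pair {N : ℕ} {m n : Fin N} (h : m ≠ n) :
    schinzelDelta ((Pi.single m 1 : Fin N → ℝ) - Pi.single n 1) ≤ 1 := by
  rw [delta_le_iff, pos'_pair h]
  have e : -((Pi.single m 1 : Fin N → ℝ) - Pi.single n 1)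
      = (Pi.single n 1 : Fin N → ℝ) - Pi.single m 1 := by module
  rw [e, pos'_pair h.symm]; norm_num

lemma coord_le_pos' {N : ℕ} (y : Fin N → ℝ) (k : Fin N) : y k ≤ pos' y := by
  have h := Finset.single_le_sum (f := fun i => max (y i) 0)
    (fun i _ => le_max_right _ _) (Finset.mem_univ k)
  exact le_trans (le_max_left _ _) h

lemma helper_zero {N : ℕ} {y : Fin N → ℝ} (hy : pos' y ≤ 1) {m : Fin N}
    (hm : y m = 1) {k : Fin N} (hk : k ≠ m) : y k ≤ 0 := by
  have hsub : ({m, k} : Finset (Fin N)) ⊆ Finset.univ := Finset.subset_univ _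
  have h1 : ∑ i ∈ ({m, k} : Finset (Fin N)), max (y i) 0 ≤ pos' y :=
    Finset.sum_le_sum_of_subset_of_nonneg hsub (fun i _ _ => le_max_right _ _)
  rw [Finset.sum_pair (Ne.symm hk)] at h1
  have h2 : max (y m) 0 = 1 := by rw [hm]; norm_num
  have h3 : y k ≤ max (y k) 0 := le_max_left _ _
  linarith

lemma comb_one {a b u w : ℝ} (ha : 0 < a) (hb : 0 < b) (hab : a + b = 1)
    (hu : u ≤ 1) (hw : w ≤ 1) (h : a * u + b * w = 1) : u = 1 ∧ w = 1 := by
  constructor <;>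
    nlinarith [mul_nonneg ha.le (sub_nonneg.2 hu), mul_nonneg hb.le (sub_nonneg.2 hw)]

lemma comb_zero {a b u w : ℝ} (ha : 0 < a) (hb : 0 < b)
    (hu : u ≤ 0) (hw : w ≤ 0) (h : a * u + b * w = 0) : u = 0 ∧ w = 0 := by
  constructor <;>
    nlinarith [mul_nonneg ha.le (neg_nonneg.2 hu), mul_nonneg hb.le (neg_nonneg.2 hw)]

def Pert {N : ℕ} (x : Fin N → ℝ) : Prop :=
  ∀ v : Fin N → ℝ, schinzelDelta (x + v) ≤ 1 → schinzelDelta (x - v) ≤ 1 → v = 0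

lemma extreme_pert {N : ℕ} {x : Fin N → ℝ}
    (hx : x ∈ Set.extremePoints ℝ {x : Fin N → ℝ | schinzelDelta x ≤ 1}) : Pert x := by
  intro v h1 h2
  have hseg : x ∈ openSegment ℝ (x + v) (x - v) :=
    ⟨1/2, 1/2, by norm_num, by norm_num, by norm_num, by module⟩
  have h := hx.2 h1 h2 hseg
  have h3 : x + v = x := h
  have := add_eq_left.mp h3
  exact this

lemma pert_neg {N : ℕ} {x : Fin N → ℝ} (hP : Pert x) : Pert (-x) := by
  intro v h1 h2
  have e1 : -x + v = -(x - v) := by module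
  have e2 : -x - v = -(x + v) := by module
  rw [e1, delta_neg'] at h1
  rw [e2, delta_neg'] at h2
  exact hP v h2 h1

lemma pert_pin {N : ℕ} {x : Fin N → ℝ} (hK : schinzelDelta x ≤ 1) (hP : Pert x)
    {m : Fin N} (hm : 0 < x m) : pos' x = 1 := by
  obtain ⟨hA, hB⟩ := (delta_le_iff x).mp hK
  by_contra hne
  have hA1 : pos' x < 1 := lt_of_le_of_ne hA hne
  set ε : ℝ := min (x m) (1 - pos' x) with hεdef
  have hε : 0 < ε := lt_min hm (by linarith)
  have hεm : ε ≤ x m := min_le_left _ _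
  have hεA : ε ≤ 1 - pos' x := min_le_right _ _
  set v : Fin N → ℝ := ε • (Pi.single m 1 : Fin N → ℝ) with hv
  have h1 : schinzelDelta (x + v) ≤ 1 := by
    rw [delta_le_iff]
    constructor
    · rw [pos'_add_single]
      rw [max_eq_left (by linarith : (0:ℝ) ≤ x m + ε), max_eq_left hm.le]
      linarith
    · rw [pos'_neg_add]
      rw [max_eq_right (by linarith : -x m - ε ≤ 0), max_eq_right (by linarith : -x m ≤ 0)]
      linarith
  have h2 : schinzelDelta (x - v) ≤ 1 := by
    have e : x - v = x + (-ε) • (Pi.single m 1 : Fin N → ℝ) := by rw [hv]; module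
    rw [e, delta_le_iff]
    constructor
    · rw [pos'_add_single]
      rw [max_eq_left (by linarith : (0:ℝ) ≤ x m + -ε), max_eq_left hm.le]
      linarith
    · rw [pos'_neg_add]
      rw [max_eq_right (by linarith : -x m - -ε ≤ 0), max_eq_right (by linarith : -x m ≤ 0)]
      linarith
  have hv0 := hP v h1 h2
  have : v m = 0 := by rw [hv0]; rfl
  rw [hv] at this
  simp only [Pi.smul_apply, Pi.single_eq_same, smul_eq_mul, mul_one] at this
  linarith

lemma pert_unique {N : ℕ} {x : Fin N → ℝ} (hK : schinzelDelta x ≤ 1) (hP : Pert x)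
    {i j : Fin N} (hij : i ≠ j) (hi : 0 < x i) (hj : 0 < x j) : False := by
  obtain ⟨hA, hB⟩ := (delta_le_iff x).mp hK
  set ε : ℝ := min (x i) (x j) with hεdef
  have hε : 0 < ε := lt_min hi hj
  have hεi : ε ≤ x i := min_le_left _ _
  have hεj : ε ≤ x j := min_le_right _ _
  set v : Fin N → ℝ := ε • (Pi.single i 1 : Fin N → ℝ) - ε • (Pi.single j 1 : Fin N → ℝ)
    with hv
  have hxij : (x + ε • (Pi.single i 1 : Fin N → ℝ)) j = x j := by
    simp [single_apply_ne hij]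
  have hxij' : (x + (-ε) • (Pi.single i 1 : Fin N → ℝ)) j = x j := by
    simp [single_apply_ne hij]
  have h1 : schinzelDelta (x + v) ≤ 1 := by
    have e : x + v = (x + ε • (Pi.single i 1 : Fin N → ℝ))
        + (-ε) • (Pi.single j 1 : Fin N → ℝ) := by rw [hv]; module
    rw [e, delta_le_iff]
    constructor
    · rw [pos'_add_single, pos'_add_single, hxij]
      rw [max_eq_left (by linarith : (0:ℝ) ≤ x i + ε), max_eq_left hi.le,
          max_eq_left (by linarith : (0:ℝ) ≤ x j + -ε), max_eq_left hj.le]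
      linarith
    · rw [pos'_neg_add, pos'_neg_add, hxij]
      rw [max_eq_right (by linarith : -x i - ε ≤ 0), max_eq_right (by linarith : -x i ≤ 0),
          max_eq_right (by linarith : -x j - -ε ≤ 0), max_eq_right (by linarith : -x j ≤ 0)]
      linarith
  have h2 : schinzelDelta (x - v) ≤ 1 := by
    have e : x - v = (x + (-ε) • (Pi.single i 1 : Fin N → ℝ))
        + ε • (Pi.single j 1 : Fin N → ℝ) := by rw [hv]; module
    rw [e, delta_le_iff]
    constructor
    · rw [pos'_add_single, pos'_add_single, hxij']
      rw [max_eq_left (by linarith : (0:ℝ) ≤ x i + -ε), max_eq_left hi.le,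
          max_eq_left (by linarith : (0:ℝ) ≤ x j + ε), max_eq_left hj.le]
      linarith
    · rw [pos'_neg_add, pos'_neg_add, hxij']
      rw [max_eq_right (by linarith : -x i - -ε ≤ 0), max_eq_right (by linarith : -x i ≤ 0),
          max_eq_right (by linarith : -x j - ε ≤ 0), max_eq_right (by linarith : -x j ≤ 0)]
      linarith
  have hv0 := hP v h1 h2
  have : v i = 0 := by rw [hv0]; rfl
  rw [hv] at this
  simp only [Pi.sub_apply, Pi.smul_apply, Pi.single_eq_same, smul_eq_mul, mul_one,
    single_apply_ne hij.symm, mul_zero, sub_zero] at this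
  linarith

lemma only_pos {N : ℕ} {x : Fin N → ℝ} (hK : schinzelDelta x ≤ 1) (hP : Pert x)
    {m : Fin N} (hm : 0 < x m) (hnn : ∀ k, 0 ≤ x k) : x = Pi.single m 1 := by
  have hz : ∀ k, k ≠ m → x k = 0 := by
    intro k hk
    rcases lt_or_eq_of_le (hnn k) with h | h
    · exact absurd (pert_unique hK hP hk h hm) (fun f => f)
    · exact h.symm
  have hpin := pert_pin hK hP hm
  have hsum : pos' x = x m := by
    unfold pos'
    rw [Finset.sum_eq_single m (fun b _ hb => by rw [hz b hb]; norm_num)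
      (fun h => absurd (Finset.mem_univ m) h)]
    exact max_eq_left hm.le
  have hxm : x m = 1 := by rw [← hsum]; exact hpin
  funext k
  by_cases hk : k = m
  · subst hk; rw [hxm, Pi.single_eq_same]
  · rw [hz k hk, single_apply_ne (Ne.symm hk)]

lemma pos_neg_case {N : ℕ} {x : Fin N → ℝ} (hK : schinzelDelta x ≤ 1) (hP : Pert x)
    {m n : Fin N} (hm : 0 < x m) (hn : x n < 0) :
    m ≠ n ∧ x = Pi.single m 1 - Pi.single n 1 := by
  have hmn : m ≠ n := by intro h; subst h; linarith
  have hKn : schinzelDelta (-x) ≤ 1 := by rw [delta_neg']; exact hK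
  have hPn : Pert (-x) := pert_neg hP
  have hnx : ∀ k, (-x) k = -(x k) := fun k => rfl
  have hz : ∀ k, k ≠ m → k ≠ n → x k = 0 := by
    intro k hkm hkn
    rcases lt_trichotomy (x k) 0 with h | h | h
    · exact absurd (pert_unique hKn hPn hkn (by rw [hnx]; linarith)
        (by rw [hnx]; linarith)) (fun f => f)
    · exact h
    · exact absurd (pert_unique hK hP hkm h hm) (fun f => f)
  have hpin := pert_pin hK hP hm
  have hsum : pos' x = x m := by
    unfold pos'
    rw [Finset.sum_eq_single m (fun b _ hb => by
        by_cases hbn : b = n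
        · subst hbn; exact max_eq_right hn.le
        · rw [hz b hb hbn]; norm_num)
      (fun h => absurd (Finset.mem_univ m) h)]
    exact max_eq_left hm.le
  have hxm : x m = 1 := by rw [← hsum]; exact hpin
  have hpin2 := pert_pin hKn hPn (m := n) (by rw [hnx]; linarith)
  have hsum2 : pos' (-x) = -(x n) := by
    unfold pos'
    rw [Finset.sum_eq_single n (fun b _ hb => by
        rw [hnx]
        by_cases hbm : b = m
        · subst hbm; exact max_eq_right (by linarith)
        · rw [hz b hbm hb]; norm_num)
      (fun h => absurd (Finset.mem_univ n) h)]
    rw [hnx]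
    exact max_eq_left (by linarith)
  have hxn : x n = -1 := by
    have := hpin2; rw [hsum2] at this; linarith
  refine ⟨hmn, funext fun k => ?_⟩
  by_cases hkm : k = m
  · subst hkm
    rw [hxm, Pi.sub_apply, Pi.single_eq_same, single_apply_ne hmn.symm]; ring
  · by_cases hkn : k = n
    · subst hkn
      rw [hxn, Pi.sub_apply, Pi.single_eq_same, single_apply_ne hmn]; ring
    · rw [hz k hkm hkn, Pi.sub_apply, single_apply_ne (Ne.symm hkm),
        single_apply_ne (Ne.symm hkn)]; ring

lemma classify {N : ℕ} (hN : 1 ≤ N) {x : Fin N → ℝ}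
    (hx : x ∈ Set.extremePoints ℝ {x : Fin N → ℝ | schinzelDelta x ≤ 1}) :
    x ∈ schE N ∪ schF N := by
  have hK : schinzelDelta x ≤ 1 := hx.1
  have hP := extreme_pert hx
  by_cases hpos : ∃ m, 0 < x m
  · obtain ⟨m, hm⟩ := hpos
    by_cases hneg : ∃ n, x n < 0
    · obtain ⟨n, hn⟩ := hneg
      obtain ⟨hmn, hx'⟩ := pos_neg_case hK hP hm hn
      exact Or.inr ⟨m, n, hmn, hx'⟩
    · push_neg at hneg
      exact Or.inl ⟨m, Or.inl (only_pos hK hP hm hneg)⟩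
  · push_neg at hpos
    by_cases hneg : ∃ n, x n < 0
    · obtain ⟨n, hn⟩ := hneg
      have hKn : schinzelDelta (-x) ≤ 1 := by rw [delta_neg']; exact hK
      have h1 : -x = Pi.single n 1 :=
        only_pos hKn (pert_neg hP) (m := n) (by show (0:ℝ) < -(x n); linarith)
          (fun k => by show (0:ℝ) ≤ -(x k); linarith [hpos k])
      exact Or.inl ⟨n, Or.inr (by rw [← h1, neg_neg])⟩
    · push_neg at hneg
      have hx0 : x = 0 := funext fun k => le_antisymm (hpos k) (hneg k)
      exfalso
      set m0 : Fin N := ⟨0, hN⟩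
      have h1 : schinzelDelta (x + Pi.single m0 1) ≤ 1 := by
        rw [hx0, zero_add]; exact delta_single m0
      have h2 : schinzelDelta (x - Pi.single m0 1) ≤ 1 := by
        rw [hx0, zero_sub]; exact delta_neg_single m0
      have h3 := hP _ h1 h2
      have h4 : (Pi.single m0 (1:ℝ) : Fin N → ℝ) m0 = 0 := by rw [h3]; rfl
      rw [Pi.single_eq_same] at h4
      exact one_ne_zero h4

lemma extreme_neg {N : ℕ} {x : Fin N → ℝ}
    (hx : x ∈ Set.extremePoints ℝ {x : Fin N → ℝ | schinzelDelta x ≤ 1}) :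
    -x ∈ Set.extremePoints ℝ {x : Fin N → ℝ | schinzelDelta x ≤ 1} := by
  constructor
  · show schinzelDelta (-x) ≤ 1
    rw [delta_neg']; exact hx.1
  · rintro y hy z hz ⟨a, b, ha, hb, hab, heq⟩
    have hy' : -y ∈ {x : Fin N → ℝ | schinzelDelta x ≤ 1} := by
      show schinzelDelta (-y) ≤ 1; rw [delta_neg']; exact hy
    have hz' : -z ∈ {x : Fin N → ℝ | schinzelDelta x ≤ 1} := by
      show schinzelDelta (-z) ≤ 1; rw [delta_neg']; exact hz
    have heq' : a • (-y) + b • (-z) = x := by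
      have e : a • (-y) + b • (-z) = -(a • y + b • z) := by module
      rw [e, heq, neg_neg]
    have h := hx.2 hy' hz' ⟨a, b, ha, hb, hab, heq'⟩
    rw [← h, neg_neg]

lemma extreme_single {N : ℕ} (m : Fin N) :
    (Pi.single m 1 : Fin N → ℝ) ∈
      Set.extremePoints ℝ {x : Fin N → ℝ | schinzelDelta x ≤ 1} := by
  constructor
  · exact delta_single m
  · rintro y hy z hz ⟨a, b, ha, hb, hab, heq⟩
    obtain ⟨hy1, hy2⟩ := (delta_le_iff y).mp hy
    obtain ⟨hz1, hz2⟩ := (delta_le_iff z).mp hz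
    have hco : ∀ k, a * y k + b * z k = (Pi.single m 1 : Fin N → ℝ) k := by
      intro k
      have h := congrFun heq k
      simp only [Pi.add_apply, Pi.smul_apply, smul_eq_mul] at h
      exact h
    have hm1 := hco m
    rw [Pi.single_eq_same] at hm1
    obtain ⟨hym, hzm⟩ := comb_one ha hb hab (le_trans (coord_le_pos' y m) hy1)
      (le_trans (coord_le_pos' z m) hz1) hm1
    have hothers : ∀ k, k ≠ m → y k = 0 ∧ z k = 0 := by
      intro k hk
      have h3 := hco k
      rw [single_apply_ne (Ne.symm hk)] at h3
      exact comb_zero ha hb (helper_zero hy1 hym hk) (helper_zero hz1 hzm hk) h3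
    · funext k
      by_cases hk : k = m
      · subst hk; rw [hym, Pi.single_eq_same]
      · rw [(hothers k hk).1, single_apply_ne (Ne.symm hk)]

lemma extreme_pair {N : ℕ} {m n : Fin N} (hmn : m ≠ n) :
    ((Pi.single m 1 : Fin N → ℝ) - Pi.single n 1) ∈
      Set.extremePoints ℝ {x : Fin N → ℝ | schinzelDelta x ≤ 1} := by
  constructor
  · exact delta_pair hmn
  · rintro y hy z hz ⟨a, b, ha, hb, hab, heq⟩
    obtain ⟨hy1, hy2⟩ := (delta_le_iff y).mp hy
    obtain ⟨hz1, hz2⟩ := (delta_le_iff z).mp hz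
    have hco : ∀ k, a * y k + b * z k
        = (Pi.single m 1 - Pi.single n 1 : Fin N → ℝ) k := by
      intro k
      have h := congrFun heq k
      simp only [Pi.add_apply, Pi.smul_apply, smul_eq_mul] at h
      exact h
    have hm1 := hco m
    rw [Pi.sub_apply, Pi.single_eq_same, single_apply_ne hmn.symm, sub_zero] at hm1
    obtain ⟨hym, hzm⟩ := comb_one ha hb hab (le_trans (coord_le_pos' y m) hy1)
      (le_trans (coord_le_pos' z m) hz1) hm1
    have hn1 := hco n
    rw [Pi.sub_apply, Pi.single_eq_same, single_apply_ne hmn, zero_sub] at hn1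
    have hn1' : a * (-(y n)) + b * (-(z n)) = 1 := by ring_nf; linarith
    have hyn' : -(y n) ≤ 1 := le_trans (coord_le_pos' (-y) n) hy2
    have hzn' : -(z n) ≤ 1 := le_trans (coord_le_pos' (-z) n) hz2
    obtain ⟨hyn, hzn⟩ := comb_one ha hb hab hyn' hzn' hn1'
    have hynn : y n = -1 := by linarith
    have hznn : z n = -1 := by linarith
    have hnegy : (-y) n = 1 := by show -(y n) = 1; linarith
    have hnegz : (-z) n = 1 := by show -(z n) = 1; linarith
    have hothers : ∀ k, k ≠ m → k ≠ n → y k = 0 ∧ z k = 0 := by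
      intro k hkm hkn
      have h1 : y k ≤ 0 := helper_zero hy1 hym hkm
      have h2 : z k ≤ 0 := helper_zero hz1 hzm hkm
      have h1' : -(y k) ≤ 0 := helper_zero hy2 hnegy hkn
      have h2' : -(z k) ≤ 0 := helper_zero hz2 hnegz hkn
      exact ⟨le_antisymm h1 (by linarith), le_antisymm h2 (by linarith)⟩
    have hval : ∀ k, (Pi.single m 1 - Pi.single n 1 : Fin N → ℝ) k
        = if k = m then 1 else if k = n then -1 else 0 := by
      intro k
      by_cases hkm : k = m
      · subst hkm
        rw [if_pos rfl, Pi.sub_apply, Pi.single_eq_same, single_apply_ne hmn.symm, sub_zero]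
      · by_cases hkn : k = n
        · subst hkn
          rw [if_neg hkm, if_pos rfl, Pi.sub_apply, Pi.single_eq_same,
            single_apply_ne hmn, zero_sub]
        · rw [if_neg hkm, if_neg hkn, Pi.sub_apply, single_apply_ne (Ne.symm hkm),
            single_apply_ne (Ne.symm hkn), sub_zero]
    · funext k
      rw [hval k]
      by_cases hkm : k = m
      · subst hkm; rw [if_pos rfl]; exact hym
      · by_cases hkn : k = n
        · subst hkn; rw [if_neg hkm, if_pos rfl]; exact hynn
        · rw [if_neg hkm, if_neg hkn]; exact (hothers k hkm hkn).1

lemma extreme_set_eq {N : ℕ} (hN : 1 ≤ N) :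
    Set.extremePoints ℝ {x : Fin N → ℝ | schinzelDelta x ≤ 1} = schE N ∪ schF N := by
  ext x
  constructor
  · exact classify hN
  · rintro (⟨m, h | h⟩ | ⟨m, n, hmn, h⟩)
    · subst h; exact extreme_single m
    · subst h; exact extreme_neg (extreme_single m)
    · subst h; exact extreme_pair hmn

lemma pair_apply {N : ℕ} {m n : Fin N} (hmn : m ≠ n) (k : Fin N) :
    (Pi.single m 1 - Pi.single n 1 : Fin N → ℝ) k
      = if k = m then 1 else if k = n then -1 else 0 := by
  by_cases hkm : k = m
  · subst hkm
    rw [if_pos rfl, Pi.sub_apply, Pi.single_eq_same, single_apply_ne hmn.symm, sub_zero]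
  · by_cases hkn : k = n
    · subst hkn
      rw [if_neg hkm, if_pos rfl, Pi.sub_apply, Pi.single_eq_same,
        single_apply_ne hmn, zero_sub]
    · rw [if_neg hkm, if_neg hkn, Pi.sub_apply, single_apply_ne (Ne.symm hkm),
        single_apply_ne (Ne.symm hkn), sub_zero]

lemma single_inj {N : ℕ} :
    Function.Injective (fun m : Fin N => (Pi.single m 1 : Fin N → ℝ)) := by
  intro a b h
  by_contra hne
  have h2 := congrFun h a
  simp only at h2
  rw [Pi.single_eq_same, single_apply_ne (Ne.symm hne)] at h2
  exact one_ne_zero h2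

lemma neg_single_inj {N : ℕ} :
    Function.Injective (fun m : Fin N => -(Pi.single m 1 : Fin N → ℝ)) := by
  intro a b h
  have h2 : (Pi.single a 1 : Fin N → ℝ) = Pi.single b 1 := by
    have := congrArg Neg.neg h
    simpa using this
  exact single_inj h2

lemma schE_eq {N : ℕ} : schE N
    = Set.range (fun m : Fin N => (Pi.single m 1 : Fin N → ℝ))
      ∪ Set.range (fun m : Fin N => -(Pi.single m 1 : Fin N → ℝ)) := by
  ext x
  constructor
  · rintro ⟨m, h | h⟩
    · exact Or.inl ⟨m, h.symm⟩
    · exact Or.inr ⟨m, h.symm⟩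
  · rintro (⟨m, h⟩ | ⟨m, h⟩)
    · exact ⟨m, Or.inl h.symm⟩
    · exact ⟨m, Or.inr h.symm⟩

lemma schF_eq {N : ℕ} : schF N
    = (fun p : Fin N × Fin N => (Pi.single p.1 1 : Fin N → ℝ) - Pi.single p.2 1) ''
        {p : Fin N × Fin N | p.1 ≠ p.2} := by
  ext x
  constructor
  · rintro ⟨m, n, hmn, h⟩
    exact ⟨(m, n), hmn, h.symm⟩
  · rintro ⟨⟨m, n⟩, hmn, h⟩
    exact ⟨m, n, hmn, h.symm⟩

lemma single_values {N : ℕ} (m k : Fin N) :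
    (Pi.single m 1 : Fin N → ℝ) k = 1 ∨ (Pi.single m 1 : Fin N → ℝ) k = 0 := by
  by_cases h : k = m
  · subst h; rw [Pi.single_eq_same]; exact Or.inl rfl
  · rw [single_apply_ne (Ne.symm h)]; exact Or.inr rfl

lemma count_eq {N : ℕ} (hN : 1 ≤ N) :
    Nat.card ↥(schE N ∪ schF N) = N ^ 2 + N := by
  have hEfin : (schE N).Finite := by
    rw [schE_eq]; exact (Set.finite_range _).union (Set.finite_range _)
  have hFfin : (schF N).Finite := by
    rw [schF_eq]; exact (Set.toFinite _).image _
  have hdisjEF : Disjoint (schE N) (schF N) := by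
    rw [Set.disjoint_left]
    rintro x ⟨m, h | h⟩ ⟨a, b, hab, h2⟩
    · have := congrFun (h.symm.trans h2) b
      rw [pair_apply hab, if_neg (Ne.symm hab), if_pos rfl] at this
      rcases single_values m b with hv | hv <;> rw [hv] at this <;> norm_num at this
    · have := congrFun (h.symm.trans h2) a
      rw [pair_apply hab, if_pos rfl] at this
      have h3 : (Pi.single m 1 : Fin N → ℝ) a = -1 := by
        have := congrArg Neg.neg this
        simpa using this
      rcases single_values m a with hv | hv <;> rw [hv] at h3 <;> norm_num at h3
  have hdisjE : Disjoint (Set.range (fun m : Fin N => (Pi.single m 1 : Fin N → ℝ)))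
      (Set.range (fun m : Fin N => -(Pi.single m 1 : Fin N → ℝ))) := by
    rw [Set.disjoint_left]
    rintro x ⟨m, rfl⟩ ⟨a, h⟩
    have := congrFun h m
    simp only [Pi.neg_apply, Pi.single_eq_same] at this
    rcases single_values a m with hv | hv <;> rw [hv] at this <;> norm_num at this
  have hcardE : (schE N).ncard = N + N := by
    rw [schE_eq, Set.ncard_union_eq hdisjE (Set.finite_range _) (Set.finite_range _),
      ← Set.image_univ, ← Set.image_univ (f := fun m : Fin N => -(Pi.single m 1 : Fin N → ℝ)),
      Set.ncard_image_of_injective _ single_inj,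
      Set.ncard_image_of_injective _ neg_single_inj, Set.ncard_univ]
    simp [Nat.card_eq_fintype_card]
  have hinjF : Set.InjOn
      (fun p : Fin N × Fin N => (Pi.single p.1 1 : Fin N → ℝ) - Pi.single p.2 1)
      {p : Fin N × Fin N | p.1 ≠ p.2} := by
    rintro ⟨a, b⟩ hab ⟨c, d⟩ hcd h
    simp only [Set.mem_setOf_eq] at hab hcd
    simp only at h
    have h1 := congrFun h a
    rw [pair_apply hab, pair_apply hcd, if_pos rfl] at h1
    have hac : a = c := by
      by_contra hne
      rw [if_neg hne] at h1
      by_cases had : a = d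
      · rw [if_pos had] at h1; norm_num at h1
      · rw [if_neg had] at h1; norm_num at h1
    have h2 := congrFun h b
    rw [pair_apply hab, pair_apply hcd, if_neg (Ne.symm hab), if_pos rfl] at h2
    have hbd : b = d := by
      by_contra hne
      rw [if_neg hne] at h2
      by_cases hbc : b = c
      · rw [if_pos hbc] at h2; norm_num at h2
      · rw [if_neg hbc] at h2; norm_num at h2
    rw [Prod.ext_iff]
    exact ⟨hac, hbd⟩
  have hcardF : (schF N).ncard = N * N - N := by
    rw [schF_eq, Set.ncard_image_of_injOn hinjF]
    have hset : {p : Fin N × Fin N | p.1 ≠ p.2}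
        = ↑((Finset.univ : Finset (Fin N)).offDiag) := by
      ext p
      simp [Finset.mem_offDiag]
    rw [hset, Set.ncard_coe_finset, Finset.offDiag_card, Finset.card_univ, Fintype.card_fin]
  rw [Nat.card_coe_set_eq, Set.ncard_union_eq hdisjEF hEfin hFfin, hcardE, hcardF,
    pow_two]
  have hNN : N ≤ N * N := Nat.le_mul_of_pos_left N (by omega)
  generalize N * N = M at hNN ⊢
  omega

/-- The set of extreme points of the Schinzel unit ball `K_N` is exactly
`E_N ∪ F_N`, and it has exactly `N² + N` elements. -/
theorem stmt5 (N : ℕ) (hN : 1 ≤ N) :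
    Set.extremePoints ℝ {x : Fin N → ℝ | schinzelDelta x ≤ 1} = schE N ∪ schF N ∧
    Nat.card ↥(schE N ∪ schF N) = N ^ 2 + N :=
  ⟨extreme_set_eq hN, count_eq hN⟩
end

section
/- Let x_1, ..., x_N be column vectors in R^N. Then |det(x_1 x_2 ⋯ x_N)| ≤ δ(x_1) δ(x_2) ⋯ δ(x_N), where δ is the Schinzel norm. -/
open Finset

def GoodRow {n : ℕ} (r : Fin n → ℝ) : Prop :=
  (∀ j, r j = 0 ∨ r j = 1 ∨ r j = -1) ∧
  (∀ j₁ j₂, r j₁ = 1 → r j₂ = 1 → j₁ = j₂) ∧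
  (∀ j₁ j₂, r j₁ = -1 → r j₂ = -1 → j₁ = j₂)

lemma goodRow_comp {n m : ℕ} {r : Fin n → ℝ} (h : GoodRow r) {f : Fin m → Fin n}
    (hf : Function.Injective f) : GoodRow (r ∘ f) := by
  obtain ⟨h0, h1, h2⟩ := h
  exact ⟨fun j => h0 (f j), fun j₁ j₂ a b => hf (h1 _ _ a b),
    fun j₁ j₂ a b => hf (h2 _ _ a b)⟩

lemma goodRow_unit {n : ℕ} {r : Fin n → ℝ} (h : GoodRow r) (hs : ∑ j, r j ≠ 0) :
    ∃ m, (r m = 1 ∨ r m = -1) ∧ ∀ j, j ≠ m → r j = 0 := by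
  obtain ⟨h0, h1, h2⟩ := h
  have hj : ∃ j, r j ≠ 0 := by
    by_contra hc
    push_neg at hc
    exact hs (Finset.sum_eq_zero fun j _ => hc j)
  obtain ⟨j, hj⟩ := hj
  rcases h0 j with hv | hv | hv
  · exact absurd hv hj
  · refine ⟨j, Or.inl hv, ?_⟩
    intro j' hj'
    by_contra hne
    have hv' : r j' = -1 := by
      rcases h0 j' with h' | h' | h'
      · exact absurd h' hne
      · exact absurd (h1 j' j h' hv) hj'
      · exact h'
    apply hs
    have key : ∀ k, r k = (if k = j then 1 else 0) + (if k = j' then -1 else 0) := by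
      intro k
      by_cases hkj : k = j
      · subst hkj
        have hne' : k ≠ j' := fun h => hj' h.symm
        simp [hv, hne']
      · by_cases hkj' : k = j'
        · subst hkj'; simp [hkj, hv']
        · rcases h0 k with h' | h' | h'
          · simp [hkj, hkj', h']
          · exact absurd (h1 k j h' hv) hkj
          · exact absurd (h2 k j' h' hv') hkj'
    rw [Finset.sum_congr rfl fun k _ => key k]
    simp [Finset.sum_add_distrib]
  · refine ⟨j, Or.inr hv, ?_⟩
    intro j' hj'
    by_contra hne
    have hv' : r j' = 1 := by
      rcases h0 j' with h' | h' | h'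
      · exact absurd h' hne
      · exact h'
      · exact absurd (h2 j' j h' hv) hj'
    apply hs
    have key : ∀ k, r k = (if k = j then -1 else 0) + (if k = j' then 1 else 0) := by
      intro k
      by_cases hkj : k = j
      · subst hkj
        have hne' : k ≠ j' := fun h => hj' h.symm
        simp [hv, hne']
      · by_cases hkj' : k = j'
        · subst hkj'; simp [hkj, hv']
        · rcases h0 k with h' | h' | h'
          · simp [hkj, hkj', h']
          · exact absurd (h1 k j' h' hv') hkj'
          · exact absurd (h2 k j h' hv) hkj
    rw [Finset.sum_congr rfl fun k _ => key k]
    simp [Finset.sum_add_distrib]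

lemma goodDet : ∀ (n : ℕ) (M : Matrix (Fin n) (Fin n) ℝ),
    (∀ i, GoodRow (M i)) → |M.det| ≤ 1 := by
  intro n
  induction n with
  | zero => intro M _; simp [Matrix.det_fin_zero]
  | succ n ih =>
    intro M hM
    by_cases hz : ∀ i, ∑ j, M i j = 0
    · have h0 : M.det = 0 := by
        rw [← Matrix.exists_mulVec_eq_zero_iff]
        refine ⟨fun _ => 1, ?_, ?_⟩
        · intro h; simpa using congrFun h 0
        · funext i
          simp [Matrix.mulVec, dotProduct, hz i]
      simp [h0]
    · push_neg at hz
      obtain ⟨i, hi⟩ := hz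
      obtain ⟨m, hm1, hm0⟩ := goodRow_unit (hM i) hi
      rw [Matrix.det_succ_row M i, Finset.sum_eq_single m]
      · have hminor : |(M.submatrix i.succAbove m.succAbove).det| ≤ 1 := by
          apply ih
          intro i'
          exact goodRow_comp (hM (i.succAbove i')) Fin.succAbove_right_injective
        rcases hm1 with h | h <;>
          simp only [h, abs_mul, abs_pow, abs_neg, abs_one, one_pow, one_mul, abs_of_nonneg,
            mul_one, neg_mul, abs_neg] <;> simpa using hminor
      · intro b _ hb
        simp [hm0 b hb]
      · intro h
        exact absurd (Finset.mem_univ m) h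
lemma goodRow_single {N : ℕ} (m : Fin N) (e : ℝ) (he : e = 1 ∨ e = -1) :
    GoodRow (Pi.single m e) := by
  refine ⟨fun j => ?_, fun j₁ j₂ a b => ?_, fun j₁ j₂ a b => ?_⟩
  · rcases eq_or_ne j m with h | h
    · subst h; rcases he with h | h <;> simp [h]
    · simp [Pi.single_apply, h]
  · rcases eq_or_ne j₁ m with h | h
    · rcases eq_or_ne j₂ m with h' | h'
      · rw [h, h']
      · rw [Pi.single_apply, if_neg h'] at b; norm_num at b
    · rw [Pi.single_apply, if_neg h] at a; norm_num at a
  · rcases eq_or_ne j₁ m with h | h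
    · rcases eq_or_ne j₂ m with h' | h'
      · rw [h, h']
      · rw [Pi.single_apply, if_neg h'] at b; norm_num at b
    · rw [Pi.single_apply, if_neg h] at a; norm_num at a

lemma goodRow_pair {N : ℕ} (m n : Fin N) :
    GoodRow (Pi.single m 1 - Pi.single n 1 : Fin N → ℝ) := by
  have hval : ∀ j, (Pi.single m 1 - Pi.single n 1 : Fin N → ℝ) j
      = (if j = m then 1 else 0) - (if j = n then 1 else 0) := by
    intro j; simp [Pi.single_apply]
  refine ⟨fun j => ?_, fun j₁ j₂ a b => ?_, fun j₁ j₂ a b => ?_⟩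
  · rw [hval]; split_ifs <;> norm_num
  · rw [hval] at a b
    have ha : j₁ = m := by by_contra h; rw [if_neg h] at a; split_ifs at a <;> norm_num at a
    have hb : j₂ = m := by by_contra h; rw [if_neg h] at b; split_ifs at b <;> norm_num at b
    rw [ha, hb]
  · rw [hval] at a b
    have ha : j₁ = n := by by_contra h; rw [if_neg h] at a; split_ifs at a <;> norm_num at a
    have hb : j₂ = n := by by_contra h; rw [if_neg h] at b; split_ifs at b <;> norm_num at b
    rw [ha, hb]

lemma schinzel_decomp {N : ℕ} (x : Fin N → ℝ) (hx : schinzelDelta x ≠ 0) :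
    ∃ (a : (Fin N ⊕ Fin N × Fin N) → ℝ) (v : (Fin N ⊕ Fin N × Fin N) → Fin N → ℝ),
      (∀ k, 0 ≤ a k) ∧ (∀ k, GoodRow (v k)) ∧ (∑ k, a k = schinzelDelta x) ∧
      ∀ i, x i = ∑ k, a k * v k i := by
  set p : Fin N → ℝ := fun i => max (x i) 0 with hp
  set q : Fin N → ℝ := fun i => max (-(x i)) 0 with hq
  set c : ℝ := ∑ i, p i with hc
  set d : ℝ := ∑ i, q i with hd
  have hp0 : ∀ i, 0 ≤ p i := fun i => le_max_right _ _
  have hq0 : ∀ i, 0 ≤ q i := fun i => le_max_right _ _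
  have hc0 : 0 ≤ c := Finset.sum_nonneg fun i _ => hp0 i
  have hd0 : 0 ≤ d := Finset.sum_nonneg fun i _ => hq0 i
  have hpq : ∀ i, p i - q i = x i := fun i => max_zero_sub_max_neg_zero_eq_self (x i)
  have hdelta : schinzelDelta x = max c d := rfl
  rcases le_total d c with hcd | hcd
  · -- c is the max
    have hcne : c ≠ 0 := by
      intro h; apply hx; rw [hdelta, max_eq_left hcd, h]
    refine ⟨Sum.elim (fun m => p m * ((c - d) / c)) (fun mn => p mn.1 * q mn.2 / c),
      Sum.elim (fun m => Pi.single m 1)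
        (fun mn => Pi.single mn.1 1 - Pi.single mn.2 1), ?_, ?_, ?_, ?_⟩
    · rintro (m | ⟨m, n⟩)
      · exact mul_nonneg (hp0 m) (div_nonneg (by linarith) hc0)
      · exact div_nonneg (mul_nonneg (hp0 m) (hq0 n)) hc0
    · rintro (m | ⟨m, n⟩)
      · exact goodRow_single m 1 (Or.inl rfl)
      · exact goodRow_pair m n
    · rw [hdelta, max_eq_left hcd]
      rw [Fintype.sum_sum_type]
      simp only [Sum.elim_inl, Sum.elim_inr]
      rw [Fintype.sum_prod_type]
      have e1 : ∑ m, p m * ((c - d) / c) = c - d := by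
        rw [← Finset.sum_mul, ← hc]; field_simp
      have e2 : ∑ m, ∑ n, p m * q n / c = d := by
        have : ∀ m, ∑ n, p m * q n / c = p m * d / c := by
          intro m; rw [← Finset.sum_div, ← Finset.mul_sum, ← hd]
        rw [Finset.sum_congr rfl fun m _ => this m, ← Finset.sum_div, ← Finset.sum_mul, ← hc]
        field_simp
      rw [e1, e2]; ring
    · intro i
      rw [Fintype.sum_sum_type]
      simp only [Sum.elim_inl, Sum.elim_inr]
      rw [Fintype.sum_prod_type]
      have e1 : ∑ m, p m * ((c - d) / c) * (Pi.single m 1 : Fin N → ℝ) i = p i * ((c - d) / c) := by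
        simp [Pi.single_apply, mul_ite, Finset.sum_ite_eq]
      have e2 : ∑ m, ∑ n, p m * q n / c *
          ((Pi.single m 1 - Pi.single n 1 : Fin N → ℝ)) i = p i * d / c - q i := by
        have inner : ∀ m, ∑ n, p m * q n / c * ((Pi.single m 1 - Pi.single n 1 : Fin N → ℝ)) i
            = (if i = m then p m * d / c else 0) - p m * q i / c := by
          intro m
          have : ∀ n, p m * q n / c * ((Pi.single m 1 - Pi.single n 1 : Fin N → ℝ)) i
              = (if i = m then p m * q n / c else 0) - (if i = n then p m * q n / c else 0) := by
            intro n; simp only [Pi.sub_apply, Pi.single_apply]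
            split_ifs <;> ring
          rw [Finset.sum_congr rfl fun n _ => this n, Finset.sum_sub_distrib]
          congr 1
          · split_ifs with h
            · rw [← Finset.sum_div, ← Finset.mul_sum, ← hd]
            · simp
          · simp [Finset.sum_ite_eq]
        rw [Finset.sum_congr rfl fun m _ => inner m, Finset.sum_sub_distrib]
        have t1 : ∑ m, (if i = m then p m * d / c else 0) = p i * d / c := by
          simp [Finset.sum_ite_eq]
        have t2 : ∑ m, p m * q i / c = q i := by
          rw [← Finset.sum_div, ← Finset.sum_mul, ← hc]
          field_simp
        rw [t1, t2]
      rw [e1, e2, ← hpq i]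
      field_simp
      ring
  · -- d is the max
    have hdne : d ≠ 0 := by
      intro h; apply hx; rw [hdelta, max_eq_right hcd, h]
    refine ⟨Sum.elim (fun m => q m * ((d - c) / d)) (fun mn => p mn.1 * q mn.2 / d),
      Sum.elim (fun m => Pi.single m (-1))
        (fun mn => Pi.single mn.1 1 - Pi.single mn.2 1), ?_, ?_, ?_, ?_⟩
    · rintro (m | ⟨m, n⟩)
      · exact mul_nonneg (hq0 m) (div_nonneg (by linarith) hd0)
      · exact div_nonneg (mul_nonneg (hp0 m) (hq0 n)) hd0
    · rintro (m | ⟨m, n⟩)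
      · exact goodRow_single m (-1) (Or.inr rfl)
      · exact goodRow_pair m n
    · rw [hdelta, max_eq_right hcd]
      rw [Fintype.sum_sum_type]
      simp only [Sum.elim_inl, Sum.elim_inr]
      rw [Fintype.sum_prod_type]
      have e1 : ∑ m, q m * ((d - c) / d) = d - c := by
        rw [← Finset.sum_mul, ← hd]; field_simp
      have e2 : ∑ m, ∑ n, p m * q n / d = c := by
        have : ∀ m, ∑ n, p m * q n / d = p m * d / d := by
          intro m; rw [← Finset.sum_div, ← Finset.mul_sum, ← hd]
        rw [Finset.sum_congr rfl fun m _ => this m]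
        have : ∀ m, p m * d / d = p m := by
          intro m; rw [mul_div_assoc, div_self hdne, mul_one]
        rw [Finset.sum_congr rfl fun m _ => this m, ← hc]
      rw [e1, e2]; ring
    · intro i
      rw [Fintype.sum_sum_type]
      simp only [Sum.elim_inl, Sum.elim_inr]
      rw [Fintype.sum_prod_type]
      have e1 : ∑ m, q m * ((d - c) / d) * (Pi.single m (-1) : Fin N → ℝ) i
          = -(q i * ((d - c) / d)) := by
        simp [Pi.single_apply, mul_ite, Finset.sum_ite_eq]
      have e2 : ∑ m, ∑ n, p m * q n / d *
          ((Pi.single m 1 - Pi.single n 1 : Fin N → ℝ)) i = p i * d / d - c * q i / d := by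
        have inner : ∀ m, ∑ n, p m * q n / d * ((Pi.single m 1 - Pi.single n 1 : Fin N → ℝ)) i
            = (if i = m then p m * d / d else 0) - p m * q i / d := by
          intro m
          have : ∀ n, p m * q n / d * ((Pi.single m 1 - Pi.single n 1 : Fin N → ℝ)) i
              = (if i = m then p m * q n / d else 0) - (if i = n then p m * q n / d else 0) := by
            intro n; simp only [Pi.sub_apply, Pi.single_apply]
            split_ifs <;> ring
          rw [Finset.sum_congr rfl fun n _ => this n, Finset.sum_sub_distrib]
          congr 1
          · split_ifs with h
            · rw [← Finset.sum_div, ← Finset.mul_sum, ← hd]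
            · simp
          · simp [Finset.sum_ite_eq]
        rw [Finset.sum_congr rfl fun m _ => inner m, Finset.sum_sub_distrib]
        have t1 : ∑ m, (if i = m then p m * d / d else 0) = p i * d / d := by
          simp [Finset.sum_ite_eq]
        have t2 : ∑ m, p m * q i / d = c * q i / d := by
          rw [← Finset.sum_div, ← Finset.sum_mul, ← hc]
        rw [t1, t2]
      rw [e1, e2, ← hpq i]
      field_simp
      ring
/-- Schinzel's determinant inequality: for column vectors `x₁,…,x_N` of a real
`N×N` matrix `X`, `|det X| ≤ δ(x₁)⋯δ(x_N)`. -/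
theorem stmt8 (N : ℕ) (X : Matrix (Fin N) (Fin N) ℝ) :
    |X.det| ≤ ∏ j, schinzelDelta (fun i => X i j) := by
  classical
  by_cases h0 : ∀ j, schinzelDelta (fun i => X i j) ≠ 0
  · choose a v ha0 hgood hsum hdec using fun j => schinzel_decomp (fun i => X i j) (h0 j)
    set F := (Matrix.detRowAlternating : (Fin N → ℝ) [⋀^Fin N]→ₗ[ℝ] ℝ) with hF
    have hdet : X.det = ∑ r : Fin N → (Fin N ⊕ Fin N × Fin N),
        (∏ j, a j (r j)) * (Matrix.of fun j => v j (r j)).det := by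
      rw [← Matrix.det_transpose]
      have hXT : X.transpose = Matrix.of (fun j => ∑ k, a j k • v j k) := by
        ext j i
        simp only [Matrix.transpose_apply, Matrix.of_apply, Finset.sum_apply, Pi.smul_apply,
          smul_eq_mul]
        exact hdec j i
      rw [hXT]
      have hms := F.toMultilinearMap.map_sum (g := fun j k => a j k • v j k)
      calc (Matrix.of fun j => ∑ k, a j k • v j k).det
          = F.toMultilinearMap (fun j => ∑ k, a j k • v j k) := rfl
        _ = ∑ r : Fin N → (Fin N ⊕ Fin N × Fin N),
            F.toMultilinearMap (fun j => a j (r j) • v j (r j)) := hms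
        _ = ∑ r : Fin N → (Fin N ⊕ Fin N × Fin N),
            (∏ j, a j (r j)) * (Matrix.of fun j => v j (r j)).det := by
            refine Finset.sum_congr rfl fun r _ => ?_
            rw [F.toMultilinearMap.map_smul_univ]
            rw [smul_eq_mul]
            rfl
    rw [hdet]
    calc |∑ r : Fin N → (Fin N ⊕ Fin N × Fin N),
          (∏ j, a j (r j)) * (Matrix.of fun j => v j (r j)).det|
        ≤ ∑ r : Fin N → (Fin N ⊕ Fin N × Fin N),
          |(∏ j, a j (r j)) * (Matrix.of fun j => v j (r j)).det| :=
        Finset.abs_sum_le_sum_abs _ _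
      _ ≤ ∑ r : Fin N → (Fin N ⊕ Fin N × Fin N), ∏ j, a j (r j) := by
          refine Finset.sum_le_sum fun r _ => ?_
          have hpn : (0:ℝ) ≤ ∏ j, a j (r j) := Finset.prod_nonneg fun j _ => ha0 j (r j)
          rw [abs_mul, abs_of_nonneg hpn]
          have hd1 := goodDet N (Matrix.of fun j => v j (r j)) (fun j => hgood j (r j))
          calc (∏ j, a j (r j)) * |(Matrix.of fun j => v j (r j)).det|
              ≤ (∏ j, a j (r j)) * 1 := mul_le_mul_of_nonneg_left hd1 hpn
            _ = ∏ j, a j (r j) := mul_one _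
      _ = ∏ j, ∑ k, a j k := by
          rw [Finset.prod_univ_sum]
          simp
      _ = ∏ j, schinzelDelta (fun i => X i j) :=
          Finset.prod_congr rfl fun j _ => hsum j
  · push_neg at h0
    obtain ⟨j, hj⟩ := h0
    have hprod : ∏ j', schinzelDelta (fun i => X i j') = 0 :=
      Finset.prod_eq_zero (Finset.mem_univ j) hj
    rw [hprod]
    have hj' : max (∑ m, max (X m j) 0) (∑ n, max (-(X n j)) 0) = 0 := by
      unfold schinzelDelta at hj
      simpa using hj
    have hc0 : (0:ℝ) ≤ ∑ m, max (X m j) 0 := Finset.sum_nonneg fun m _ => le_max_right _ _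
    have hd0 : (0:ℝ) ≤ ∑ n, max (-(X n j)) 0 := Finset.sum_nonneg fun n _ => le_max_right _ _
    have hc : ∑ m, max (X m j) 0 = 0 := by
      have h := le_max_left (∑ m, max (X m j) 0) (∑ n, max (-(X n j)) 0)
      rw [hj'] at h
      exact le_antisymm h hc0
    have hd : ∑ n, max (-(X n j)) 0 = 0 := by
      have h := le_max_right (∑ m, max (X m j) 0) (∑ n, max (-(X n j)) 0)
      rw [hj'] at h
      exact le_antisymm h hd0
    have hcol : ∀ i, X i j = 0 := by
      intro i
      have h1 : max (X i j) 0 = 0 :=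
        (Finset.sum_eq_zero_iff_of_nonneg (fun m _ => le_max_right _ _)).mp hc i
          (Finset.mem_univ i)
      have h2 : max (-(X i j)) 0 = 0 :=
        (Finset.sum_eq_zero_iff_of_nonneg (fun n _ => le_max_right _ _)).mp hd i
          (Finset.mem_univ i)
      have h3 : X i j ≤ 0 := by
        have h := le_max_left (X i j) 0
        rw [h1] at h
        exact h
      have h4 : -(X i j) ≤ 0 := by
        have h := le_max_left (-(X i j)) 0
        rw [h2] at h
        exact h
      linarith
    rw [Matrix.det_eq_zero_of_column_eq_zero j hcol]
    simp
end

section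
/- If x_1, ..., x_L are vectors in R^N with 2L ≤ N, then ‖x_1 ∧ x_2 ∧ ⋯ ∧ x_L‖_1 ≤ 2^L δ(x_1) δ(x_2) ⋯ δ(x_L). -/
lemma abs_det_le_sum {L : ℕ} (M : Matrix (Fin L) (Fin L) ℝ) :
    |M.det| ≤ ∑ σ : Equiv.Perm (Fin L), ∏ i, |M (σ i) i| := by
  rw [Matrix.det_apply]
  refine (Finset.abs_sum_le_sum_abs _ _).trans_eq ?_
  refine Finset.sum_congr rfl fun σ _ => ?_
  rcases Int.units_eq_one_or (Equiv.Perm.sign σ) with h | h <;>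
    simp [h, Units.smul_def, Finset.abs_prod]

lemma wedge_le_prod_l1 {N L : ℕ} (x : Fin L → Fin N → ℝ) :
    wedgeL1 x ≤ ∏ l, ∑ i, |x l i| := by
  classical
  set g : Finset (Fin N) × Equiv.Perm (Fin L) → ℝ :=
    fun p => if h : p.1.card = L then ∏ j, |x j ((p.1.orderIsoOfFin h (p.2 j) : Fin N))| else 0
    with hg
  have step1 : wedgeL1 x ≤ ∑ p : Finset (Fin N) × Equiv.Perm (Fin L), g p := by
    rw [wedgeL1, Fintype.sum_prod_type]
    refine Finset.sum_le_sum fun I _ => ?_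
    by_cases h : I.card = L
    · rw [dif_pos h]
      refine (abs_det_le_sum _).trans_eq ?_
      refine Finset.sum_congr rfl fun σ _ => ?_
      rw [hg]; simp only [dif_pos h]; rfl
    · rw [dif_neg h]
      refine Finset.sum_nonneg fun σ _ => ?_
      rw [hg]; simp [dif_neg h]
  set s : Finset (Finset (Fin N) × Equiv.Perm (Fin L)) :=
    Finset.univ.filter (fun p => p.1.card = L) with hs
  have cardmem : ∀ q : {p // p ∈ s}, q.1.1.card = L := fun q => (Finset.mem_filter.mp q.2).2
  set F : {p // p ∈ s} → (Fin L → Fin N) :=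
    fun q j => (q.1.1.orderIsoOfFin (cardmem q) (q.1.2 j) : Fin N) with hF
  have hFmem : ∀ q j, F q j ∈ q.1.1 := fun q j => (q.1.1.orderIsoOfFin (cardmem q) (q.1.2 j)).2
  have hFinj : ∀ q, Function.Injective (F q) := by
    intro q a b hab
    exact q.1.2.injective ((q.1.1.orderIsoOfFin (cardmem q)).injective (Subtype.ext hab))
  have himg : ∀ q, Finset.image (F q) Finset.univ = q.1.1 := by
    intro q
    refine Finset.eq_of_subset_of_card_le (fun a ha => ?_) ?_
    · obtain ⟨j, _, rfl⟩ := Finset.mem_image.mp ha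
      exact hFmem q j
    · rw [Finset.card_image_of_injective _ (hFinj q), Finset.card_univ, Fintype.card_fin,
        cardmem q]
  have hFinj2 : Function.Injective F := by
    rintro ⟨⟨I₁, σ₁⟩, h1⟩ ⟨⟨I₂, σ₂⟩, h2⟩ hFe
    have hI : I₁ = I₂ := by
      have := himg ⟨⟨I₁, σ₁⟩, h1⟩
      rw [hFe] at this
      exact this.symm.trans (himg _)
    subst hI
    have hσ : σ₁ = σ₂ := by
      ext j
      have := congrFun hFe j
      simp only [hF] at this
      exact congrArg Fin.val
        ((I₁.orderIsoOfFin (cardmem ⟨⟨I₁, σ₁⟩, h1⟩)).injective (Subtype.ext this))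
    subst hσ; rfl
  have step2 : (∑ p : Finset (Fin N) × Equiv.Perm (Fin L), g p)
      ≤ ∑ f : Fin L → Fin N, ∏ j, |x j (f j)| := by
    have e1 : (∑ p : Finset (Fin N) × Equiv.Perm (Fin L), g p) = ∑ p ∈ s, g p := by
      rw [hs]
      refine (Finset.sum_filter_of_ne fun p _ hp => ?_).symm
      by_contra hcard
      exact hp (by rw [hg]; simp [dif_neg hcard])
    have e2 : (∑ p ∈ s, g p) = ∑ q ∈ s.attach, ∏ j, |x j (F q j)| := by
      rw [← Finset.sum_attach s g]
      refine Finset.sum_congr rfl fun q _ => ?_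
      rw [hg]
      simp only [dif_pos (cardmem q)]; rfl
    have e3 : (∑ q ∈ s.attach, ∏ j, |x j (F q j)|)
        = ∑ f ∈ s.attach.image F, ∏ j, |x j (f j)| := by
      rw [Finset.sum_image (fun a _ b _ hab => hFinj2 hab)]
    rw [e1, e2, e3]
    refine Finset.sum_le_sum_of_subset_of_nonneg (Finset.subset_univ _) fun f _ _ => ?_
    exact Finset.prod_nonneg fun j _ => abs_nonneg _
  have step3 : (∑ f : Fin L → Fin N, ∏ j, |x j (f j)|) = ∏ l, ∑ i, |x l i| := by
    rw [Finset.prod_univ_sum]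
    simp [Fintype.piFinset_univ]
  exact (step1.trans step2).trans_eq step3

lemma schinzelDelta_nonneg {N : ℕ} (x : Fin N → ℝ) : 0 ≤ schinzelDelta x :=
  le_max_of_le_left (Finset.sum_nonneg fun i _ => le_max_right _ _)

lemma l1_le_two_delta {N : ℕ} (x : Fin N → ℝ) : ∑ i, |x i| ≤ 2 * schinzelDelta x := by
  have : ∀ i, |x i| = max (x i) 0 + max (-(x i)) 0 := fun i => by
    rcases le_total (x i) 0 with h | h
    · rw [abs_of_nonpos h, max_eq_right h, max_eq_left (neg_nonneg.mpr h), zero_add]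
    · rw [abs_of_nonneg h, max_eq_left h, max_eq_right (neg_nonpos.mpr h), add_zero]
  calc ∑ i, |x i| = (∑ i, max (x i) 0) + ∑ i, max (-(x i)) 0 := by
        rw [← Finset.sum_add_distrib]; exact Finset.sum_congr rfl fun i _ => this i
    _ ≤ schinzelDelta x + schinzelDelta x :=
        add_le_add (le_max_left _ _) (le_max_right _ _)
    _ = 2 * schinzelDelta x := by ring

/-- If `2L ≤ N` then `‖x₁ ∧ ⋯ ∧ x_L‖₁ ≤ 2^L δ(x₁)⋯δ(x_L)` for all `x₁,…,x_L ∈ ℝ^N`. -/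
theorem stmt12 (N L : ℕ) (h : 2 * L ≤ N) (x : Fin L → Fin N → ℝ) :
    wedgeL1 x ≤ 2 ^ L * ∏ l, schinzelDelta (x l) := by
  refine (wedge_le_prod_l1 x).trans ?_
  calc ∏ l, ∑ i, |x l i| ≤ ∏ l, 2 * schinzelDelta (x l) :=
        Finset.prod_le_prod (fun l _ => Finset.sum_nonneg fun i _ => abs_nonneg _)
          (fun l _ => l1_le_two_delta (x l))
    _ = 2 ^ L * ∏ l, schinzelDelta (x l) := by
        rw [Finset.prod_mul_distrib, Finset.prod_const, Finset.card_univ, Fintype.card_fin]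
end

section
/- Let Y = (y_1 ⋯ y_N) be an L×N matrix whose rows each have exactly two nonzero entries, one equal to 1 and one equal to −1 (so the transpose has columns in F_N), with no column y_n equal to 0. For ℓ = 1,...,L set S(ℓ) = {n : |y_{ℓn}| = 1}, and let P be the associated fixed-set algebra. Then for a nonempty A ⊆ {1,...,N}: A ∈ P if and only if Σ_{n ∈ A} y_n = 0. -/
/-- Let `Y` be an `L×N` integer matrix whose rows each have exactly one entry `1` and
one entry `−1` (all others zero) and with no zero column; `S(ℓ)` is the support of the
`ℓ`-th row, with `η`, `P` as before.  Then for nonempty `A ⊆ {1,…,N}`: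
`A ∈ P` iff `Σ_{n ∈ A} yₙ = 0`, where `yₙ` are the columns of `Y`. -/
theorem stmt15 (N L : ℕ) (Y : Matrix (Fin L) (Fin N) ℤ)
    (hrow : ∀ l, ∃ m n : Fin N, m ≠ n ∧
      Y l = (Pi.single m 1 : Fin N → ℤ) - Pi.single n 1)
    (hcol : ∀ n, (fun l => Y l n) ≠ 0) :
    let S : Fin L → Finset (Fin N) := fun l => Finset.univ.filter fun n => Y l n ≠ 0
    let η : Finset (Fin N) → Finset (Fin N) :=
      fun A => Finset.univ.biUnion fun l => if (S l ∩ A).Nonempty then S l else ∅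
    ∀ A : Finset (Fin N), A.Nonempty →
      (η A = A ↔ ∑ n ∈ A, (fun l => Y l n) = 0) := by
  intro S η A hA
  have hsum : ∀ l m n, Y l = (Pi.single m 1 : Fin N → ℤ) - Pi.single n 1 →
      ∑ k ∈ A, Y l k = (if m ∈ A then (1:ℤ) else 0) - (if n ∈ A then 1 else 0) := by
    intro l m n hY
    simp [hY, Pi.single_apply, Finset.sum_sub_distrib]
  constructor
  · intro hη
    funext l
    obtain ⟨m, n, hmn, hY⟩ := hrow l
    have hmS : m ∈ S l := by
      simp [S, hY, Pi.single_apply, hmn, hmn.symm]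
    have hnS : n ∈ S l := by
      simp [S, hY, Pi.single_apply, hmn, hmn.symm]
    have key : ∀ a, a ∈ S l → a ∈ A → S l ⊆ A := by
      intro a haS haA
      intro b hb
      rw [← hη]
      exact Finset.mem_biUnion.2 ⟨l, Finset.mem_univ l,
        by rw [if_pos ⟨a, Finset.mem_inter.2 ⟨haS, haA⟩⟩]; exact hb⟩
    have : (∑ k ∈ A, Y l k) = 0 := by
      rw [hsum l m n hY]
      by_cases hm : m ∈ A
      · rw [if_pos hm, if_pos (key m hmS hm hnS)]; ring
      · by_cases hn : n ∈ A
        · exact absurd (key n hnS hn hmS) hm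
        · rw [if_neg hm, if_neg hn]; ring
    simpa using this
  · intro hz
    have hz' : ∀ l, ∑ k ∈ A, Y l k = 0 := fun l => by simpa [Finset.sum_apply] using congrFun hz l
    ext k
    constructor
    · intro hk
      obtain ⟨l, _, hkl⟩ := Finset.mem_biUnion.1 hk
      by_cases hne : (S l ∩ A).Nonempty
      · rw [if_pos hne] at hkl
        obtain ⟨m, n, hmn, hY⟩ := hrow l
        have hiff : (m ∈ A) ↔ (n ∈ A) := by
          have := hz' l
          rw [hsum l m n hY] at this
          by_cases hm : m ∈ A <;> by_cases hn : n ∈ A <;>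
            simp [hm, hn] at this ⊢
        obtain ⟨a, ha⟩ := hne
        have haS := (Finset.mem_inter.1 ha).1
        have haA := (Finset.mem_inter.1 ha).2
        have hmem : ∀ b, b ∈ S l → b = m ∨ b = n := by
          intro b hb
          have : Y l b ≠ 0 := (Finset.mem_filter.1 hb).2
          rw [hY] at this
          by_contra h
          push_neg at h
          simp [Pi.single_apply, h.1, h.2] at this
        have hmA : m ∈ A := by
          rcases hmem a haS with rfl | rfl
          · exact haA
          · exact hiff.2 haA
        rcases hmem k hkl with rfl | rfl
        · exact hmA
        · exact hiff.1 hmA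
      · rw [if_neg hne] at hkl; exact absurd hkl (Finset.notMem_empty k)
    · intro hk
      have := hcol k
      have : ∃ l, Y l k ≠ 0 := by
        by_contra h
        push_neg at h
        exact this (funext h)
      obtain ⟨l, hl⟩ := this
      have hkS : k ∈ S l := Finset.mem_filter.2 ⟨Finset.mem_univ k, hl⟩
      exact Finset.mem_biUnion.2 ⟨l, Finset.mem_univ l,
        by rw [if_pos ⟨k, Finset.mem_inter.2 ⟨hkS, hk⟩⟩]; exact hkS⟩
end

section
/- In the setting of the previous statement, a nonempty subset A ⊆ {1,...,N} is a minimal element of P if and only if the subgroup of Z^L generated by {y_n : n ∈ A} has rank |A| − 1 and every proper nonempty subcollection {y_n : n ∈ B}, B ⊊ A, is linearly independent. Moreover, if the minimal sets are A_1,...,A_r then N − L ≤ r, with equality when rank Y = L. -/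
open Finset

section SchAux

open scoped Classical

variable {N L : ℕ}

/-- Two columns are edge-related if some row is nonzero at both. -/
private def eRel (Y : Matrix (Fin L) (Fin N) ℤ) (m n : Fin N) : Prop :=
  ∃ l, Y l m ≠ 0 ∧ Y l n ≠ 0

/-- Reachability: equivalence closure of `eRel`. -/
private def rRel (Y : Matrix (Fin L) (Fin N) ℤ) (m n : Fin N) : Prop :=
  Relation.EqvGen (eRel Y) m n

private lemma rRel_refl (Y : Matrix (Fin L) (Fin N) ℤ) (v : Fin N) : rRel Y v v :=
  Relation.EqvGen.refl v

private lemma rRel_symm {Y : Matrix (Fin L) (Fin N) ℤ} {v w : Fin N}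
    (h : rRel Y v w) : rRel Y w v := Relation.EqvGen.symm _ _ h

private lemma rRel_trans {Y : Matrix (Fin L) (Fin N) ℤ} {u v w : Fin N}
    (h : rRel Y u v) (h' : rRel Y v w) : rRel Y u w := Relation.EqvGen.trans _ _ _ h h'

/-- Connected component of `v` as a finset. -/
private noncomputable def CC (Y : Matrix (Fin L) (Fin N) ℤ) (v : Fin N) : Finset (Fin N) :=
  Finset.univ.filter fun w => rRel Y v w

private lemma mem_CC {Y : Matrix (Fin L) (Fin N) ℤ} {v w : Fin N} :
    w ∈ CC Y v ↔ rRel Y v w := by simp [CC]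

private lemma CC_eq_of_rRel {Y : Matrix (Fin L) (Fin N) ℤ} {v w : Fin N}
    (h : rRel Y v w) : CC Y v = CC Y w := by
  ext x
  simp only [mem_CC]
  exact ⟨fun h' => rRel_trans (rRel_symm h) h', fun h' => rRel_trans h h'⟩

/-- `A` is closed: any row touching `A` has all its support in `A`. -/
private def IsClosed' (Y : Matrix (Fin L) (Fin N) ℤ) (A : Finset (Fin N)) : Prop :=
  ∀ l m n, Y l m ≠ 0 → Y l n ≠ 0 → m ∈ A → n ∈ A

private def MinC (Y : Matrix (Fin L) (Fin N) ℤ) (A : Finset (Fin N)) : Prop :=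
  A.Nonempty ∧ IsClosed' Y A ∧ ∀ B ⊆ A, B.Nonempty → B ≠ A → ¬ IsClosed' Y B

private lemma closed_CC (Y : Matrix (Fin L) (Fin N) ℤ) (v : Fin N) :
    IsClosed' Y (CC Y v) := by
  intro l m n hm hn hmA
  rw [mem_CC] at hmA ⊢
  exact rRel_trans hmA (Relation.EqvGen.rel _ _ ⟨l, hm, hn⟩)

private lemma mem_of_closed {Y : Matrix (Fin L) (Fin N) ℤ} {A : Finset (Fin N)}
    (hA : IsClosed' Y A) {v w : Fin N} (h : rRel Y v w) : v ∈ A → w ∈ A := by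
  have key : v ∈ A ↔ w ∈ A := by
    induction h with
    | rel x y hxy => obtain ⟨l, hx, hy⟩ := hxy; exact ⟨hA l x y hx hy, hA l y x hy hx⟩
    | refl x => exact Iff.rfl
    | symm x y _ ih => exact ih.symm
    | trans x y z _ _ ih1 ih2 => exact ih1.trans ih2
  exact fun hv => key.1 hv

private lemma CC_subset_of_closed {Y : Matrix (Fin L) (Fin N) ℤ} {A : Finset (Fin N)}
    (hA : IsClosed' Y A) {v : Fin N} (hv : v ∈ A) : CC Y v ⊆ A := by
  intro w hw
  exact mem_of_closed hA (mem_CC.1 hw) hv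

private lemma minC_CC (Y : Matrix (Fin L) (Fin N) ℤ) (v : Fin N) : MinC Y (CC Y v) := by
  refine ⟨⟨v, mem_CC.2 (rRel_refl Y v)⟩, closed_CC Y v, ?_⟩
  intro B hBsub hBne hBneq hBcl
  obtain ⟨w, hw⟩ := hBne
  have hvw : rRel Y v w := mem_CC.1 (hBsub hw)
  have h1 : CC Y w ⊆ B := CC_subset_of_closed hBcl hw
  exact hBneq (subset_antisymm hBsub (by rw [CC_eq_of_rRel hvw]; exact h1))

private lemma minC_iff_CC {Y : Matrix (Fin L) (Fin N) ℤ} {A : Finset (Fin N)} :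
    MinC Y A ↔ ∃ v, v ∈ A ∧ A = CC Y v := by
  constructor
  · rintro ⟨⟨v, hv⟩, hcl, hmin⟩
    refine ⟨v, hv, ?_⟩
    by_contra hne
    exact hmin (CC Y v) (CC_subset_of_closed hcl hv) ⟨v, mem_CC.2 (rRel_refl Y v)⟩
      (fun h => hne h.symm) (closed_CC Y v)
  · rintro ⟨v, hv, rfl⟩
    exact minC_CC Y v



variable {Y : Matrix (Fin L) (Fin N) ℤ}

private lemma row_apply {l : Fin L} {a b : Fin N}
    (hY : Y l = (Pi.single a 1 : Fin N → ℤ) - Pi.single b 1) (n : Fin N) :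
    Y l n = (if n = a then 1 else 0) - if n = b then 1 else 0 := by
  rw [hY]; simp [Pi.single_apply]

private lemma entry_ne {l : Fin L} {a b : Fin N} (hab : a ≠ b)
    (hY : Y l = (Pi.single a 1 : Fin N → ℤ) - Pi.single b 1) {n : Fin N} :
    Y l n ≠ 0 ↔ n = a ∨ n = b := by
  rw [row_apply hY n]
  rcases eq_or_ne n a with h | h <;> rcases eq_or_ne n b with h' | h' <;> simp_all

private lemma rowsumZ {l : Fin L} {a b : Fin N}
    (hY : Y l = (Pi.single a 1 : Fin N → ℤ) - Pi.single b 1) (c : Fin N → ℤ) :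
    ∑ n, c n * Y l n = c a - c b := by
  simp only [row_apply hY, mul_sub, mul_ite, mul_one, mul_zero]
  rw [Finset.sum_sub_distrib]
  simp [Finset.sum_ite_eq']

private lemma rowsumQ {l : Fin L} {a b : Fin N}
    (hY : Y l = (Pi.single a 1 : Fin N → ℤ) - Pi.single b 1) (c : Fin N → ℚ) :
    ∑ n, (Y l n : ℚ) * c n = c a - c b := by
  simp only [row_apply hY, Int.cast_sub, Int.cast_ite, Int.cast_one, Int.cast_zero,
    sub_mul, ite_mul, one_mul, zero_mul]
  rw [Finset.sum_sub_distrib]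
  simp [Finset.sum_ite_eq]

/-- a function respecting all rows is constant on reachability classes -/
private lemma const_on_rRel {α : Type*}
    (hrow : ∀ l, ∃ m n : Fin N, m ≠ n ∧
      Y l = (Pi.single m 1 : Fin N → ℤ) - Pi.single n 1)
    {c : Fin N → α}
    (hc : ∀ l (a b : Fin N), a ≠ b →
      Y l = (Pi.single a 1 : Fin N → ℤ) - Pi.single b 1 → c a = c b)
    {v w : Fin N} (h : rRel Y v w) : c v = c w := by
  induction h with
  | rel x y hxy =>
      obtain ⟨l, hx, hy⟩ := hxy
      obtain ⟨a, b, hab, hY⟩ := hrow l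
      have hcab : c a = c b := hc l a b hab hY
      rcases (entry_ne hab hY).1 hx with h1 | h1 <;>
        rcases (entry_ne hab hY).1 hy with h2 | h2 <;> subst h1 <;> subst h2 <;>
        first | rfl | exact hcab | exact hcab.symm
  | refl x => rfl
  | symm x y _ ih => exact ih.symm
  | trans x y z _ _ ih1 ih2 => exact ih1.trans ih2

private def colsY (Y : Matrix (Fin L) (Fin N) ℤ) : Fin N → (Fin L → ℤ) :=
  fun n l => Y l n

private def DepZ (Y : Matrix (Fin L) (Fin N) ℤ) (c : Fin N → ℤ) : Prop :=
  ∀ l, ∑ n, c n * Y l n = 0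

private lemma sum_smul_eq_zero_iff {c : Fin N → ℤ} :
    ∑ n, c n • colsY Y n = 0 ↔ DepZ Y c := by
  simp [funext_iff, Finset.sum_apply, colsY, DepZ]

private lemma depZ_const
    (hrow : ∀ l, ∃ m n : Fin N, m ≠ n ∧
      Y l = (Pi.single m 1 : Fin N → ℤ) - Pi.single n 1)
    {c : Fin N → ℤ} (hc : DepZ Y c) {v w : Fin N} (h : rRel Y v w) : c v = c w := by
  refine const_on_rRel hrow (fun l a b hab hY => ?_) h
  have := hc l
  rw [rowsumZ hY] at this
  omega

private lemma dep_indicator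
    (hrow : ∀ l, ∃ m n : Fin N, m ≠ n ∧
      Y l = (Pi.single m 1 : Fin N → ℤ) - Pi.single n 1)
    (v : Fin N) : DepZ Y (fun n => if rRel Y v n then 1 else 0) := by
  intro l
  obtain ⟨a, b, hab, hY⟩ := hrow l
  rw [rowsumZ hY]
  have hr : rRel Y v a ↔ rRel Y v b := by
    have he : eRel Y a b :=
      ⟨l, (entry_ne hab hY).2 (Or.inl rfl), (entry_ne hab hY).2 (Or.inr rfl)⟩
    exact ⟨fun h => rRel_trans h (Relation.EqvGen.rel _ _ he),
      fun h => rRel_trans h (rRel_symm (Relation.EqvGen.rel _ _ he))⟩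
  by_cases h : rRel Y v a <;> simp [h, hr.1, (not_iff_not.2 hr).1, hr]

private lemma sum_CC_cols
    (hrow : ∀ l, ∃ m n : Fin N, m ≠ n ∧
      Y l = (Pi.single m 1 : Fin N → ℤ) - Pi.single n 1)
    (v : Fin N) : ∑ n ∈ CC Y v, colsY Y n = 0 := by
  have h := sum_smul_eq_zero_iff.2 (dep_indicator hrow v)
  rw [← h]
  rw [CC, Finset.sum_filter]
  congr 1
  ext n
  by_cases hn : rRel Y v n <;> simp [hn]

/-- extension of a function on a subtype to `Fin N` by zero -/
private noncomputable def extZ (B : Finset (Fin N)) (g : ↥B → ℤ) : Fin N → ℤ :=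
  fun n => if h : n ∈ B then g ⟨n, h⟩ else 0

private lemma sum_extZ {M : Type*} [AddCommGroup M] [Module ℤ M]
    (B : Finset (Fin N)) (g : ↥B → ℤ) (f : Fin N → M) :
    ∑ n, extZ B g n • f n = ∑ i : ↥B, g i • f (i : Fin N) := by
  rw [← Finset.sum_subset (Finset.subset_univ B)
    (fun x _ hx => by simp [extZ, hx])]
  rw [← Finset.sum_coe_sort B (fun n => extZ B g n • f n)]
  refine Finset.sum_congr rfl fun i _ => ?_
  simp [extZ]

private lemma indep_of_ssub_CC
    (hrow : ∀ l, ∃ m n : Fin N, m ≠ n ∧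
      Y l = (Pi.single m 1 : Fin N → ℤ) - Pi.single n 1)
    {v : Fin N} {B : Finset (Fin N)} (hBsub : B ⊆ CC Y v) (hBne : B ≠ CC Y v) :
    LinearIndependent ℤ (fun n : ↥B => fun l => Y l (n : Fin N)) := by
  rw [Fintype.linearIndependent_iff]
  intro g hg i
  have hdep : DepZ Y (extZ B g) := by
    rw [← sum_smul_eq_zero_iff, sum_extZ B g (colsY Y)]
    exact hg
  obtain ⟨u, huCC, huB⟩ := Finset.exists_of_ssubset (lt_of_le_of_ne hBsub hBne)
  have h1 : extZ B g (i : Fin N) = extZ B g u :=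
    depZ_const hrow hdep
      (rRel_trans (rRel_symm (mem_CC.1 (hBsub i.2))) (mem_CC.1 huCC))
  have h2 : extZ B g u = 0 := by simp [extZ, huB]
  have h3 : extZ B g (i : Fin N) = g i := by simp [extZ, i.2]
  rw [← h3, h1, h2]

private lemma card_CC_ge_two
    (hrow : ∀ l, ∃ m n : Fin N, m ≠ n ∧
      Y l = (Pi.single m 1 : Fin N → ℤ) - Pi.single n 1)
    (hcol : ∀ n, (fun l => Y l n) ≠ 0) (v : Fin N) : 2 ≤ (CC Y v).card := by
  obtain ⟨l, hl⟩ := Function.ne_iff.1 (hcol v)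
  obtain ⟨a, b, hab, hY⟩ := hrow l
  have ha : Y l a ≠ 0 := (entry_ne hab hY).2 (Or.inl rfl)
  have hb : Y l b ≠ 0 := (entry_ne hab hY).2 (Or.inr rfl)
  have hsub : ({a, b} : Finset (Fin N)) ⊆ CC Y v := by
    intro x hx
    rcases Finset.mem_insert.1 hx with rfl | hx
    · exact mem_CC.2 (Relation.EqvGen.rel _ _ ⟨l, hl, ha⟩)
    · rw [Finset.mem_singleton] at hx; subst hx
      exact mem_CC.2 (Relation.EqvGen.rel _ _ ⟨l, hl, hb⟩)
  calc 2 = ({a, b} : Finset (Fin N)).card := (Finset.card_pair hab).symm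
    _ ≤ (CC Y v).card := Finset.card_le_card hsub

private lemma image_coe_eq_range (B : Finset (Fin N)) :
    (fun n => fun l => Y l n) '' (B : Set (Fin N))
      = Set.range (fun n : ↥B => fun l => Y l (n : Fin N)) := by
  ext x
  simp only [Set.mem_image, Set.mem_range, Finset.mem_coe, Subtype.exists]
  constructor
  · rintro ⟨n, hn, rfl⟩; exact ⟨n, hn, rfl⟩
  · rintro ⟨n, hn, rfl⟩; exact ⟨n, hn, rfl⟩

private lemma finrank_span_of_indep {B : Finset (Fin N)}
    (li : LinearIndependent ℤ (fun n : ↥B => fun l => Y l (n : Fin N))) :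
    Module.finrank ℤ
      ↥(Submodule.span ℤ ((fun n => fun l => Y l n) '' (B : Set (Fin N)))) = B.card := by
  rw [image_coe_eq_range]
  rw [Module.finrank_eq_card_basis (Module.Basis.span li)]
  exact Fintype.card_coe B

private lemma finrank_CC
    (hrow : ∀ l, ∃ m n : Fin N, m ≠ n ∧
      Y l = (Pi.single m 1 : Fin N → ℤ) - Pi.single n 1)
    (hcol : ∀ n, (fun l => Y l n) ≠ 0) (v : Fin N) :
    Module.finrank ℤ
      ↥(Submodule.span ℤ ((fun n => fun l => Y l n) '' ((CC Y v : Finset (Fin N)) : Set (Fin N))))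
      = (CC Y v).card - 1 := by
  have hv : v ∈ CC Y v := mem_CC.2 (rRel_refl Y v)
  have hsub : (CC Y v).erase v ⊆ CC Y v := Finset.erase_subset v (CC Y v)
  have hne : (CC Y v).erase v ≠ CC Y v := fun h => Finset.notMem_erase v (CC Y v) (by rw [h]; exact hv)
  have li : LinearIndependent ℤ (fun n : ↥((CC Y v).erase v) => fun l => Y l (n : Fin N)) :=
    indep_of_ssub_CC hrow hsub hne
  have hsum : ∑ n ∈ CC Y v, colsY Y n = 0 := sum_CC_cols hrow v
  have hspan : Submodule.span ℤ ((fun n => fun l => Y l n) '' ((CC Y v : Finset (Fin N)) : Set (Fin N)))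
      = Submodule.span ℤ ((fun n => fun l => Y l n) '' (((CC Y v).erase v : Finset (Fin N)) : Set (Fin N))) := by
    apply le_antisymm
    · rw [Submodule.span_le]
      rintro x ⟨n, hn, rfl⟩
      rcases eq_or_ne n v with rfl | hnv
      · have hv' : colsY Y n = -∑ w ∈ (CC Y n).erase n, colsY Y w := by
          have h := Finset.add_sum_erase (CC Y n) (colsY Y) hv
          rw [hsum] at h
          exact eq_neg_of_add_eq_zero_left h
        show colsY Y n ∈ _
        rw [hv']
        exact Submodule.neg_mem _ (Submodule.sum_mem _ fun w hw =>
          Submodule.subset_span ⟨w, hw, rfl⟩)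
      · exact Submodule.subset_span
          ⟨n, Finset.mem_coe.2 (Finset.mem_erase.2 ⟨hnv, hn⟩), rfl⟩
    · exact Submodule.span_mono (Set.image_mono (by exact_mod_cast hsub))
  rw [hspan, finrank_span_of_indep li, Finset.card_erase_of_mem hv]

private lemma not_indep_full {A : Finset (Fin N)} (hA : A.Nonempty)
    (h1 : Module.finrank ℤ
      ↥(Submodule.span ℤ ((fun n => fun l => Y l n) '' (A : Set (Fin N)))) = A.card - 1) :
    ¬ LinearIndependent ℤ (fun n : ↥A => fun l => Y l (n : Fin N)) := by
  intro hli
  have h2 := finrank_span_of_indep hli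
  rw [h1] at h2
  have := Finset.card_pos.2 hA
  omega

private lemma minC_of_rank
    (hrow : ∀ l, ∃ m n : Fin N, m ≠ n ∧
      Y l = (Pi.single m 1 : Fin N → ℤ) - Pi.single n 1)
    {A : Finset (Fin N)} (hA : A.Nonempty)
    (h1 : Module.finrank ℤ
      ↥(Submodule.span ℤ ((fun n => fun l => Y l n) '' (A : Set (Fin N)))) = A.card - 1)
    (h2 : ∀ B ⊂ A, B.Nonempty →
      LinearIndependent ℤ (fun n : ↥B => fun l => Y l (n : Fin N))) :
    MinC Y A := by
  obtain ⟨g, hg0, i0, hi0⟩ := Fintype.not_linearIndependent_iff.1 (not_indep_full hA h1)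
  set c : Fin N → ℤ := extZ A g with hc
  have hdep : DepZ Y c := by
    rw [← sum_smul_eq_zero_iff, hc, sum_extZ A g (colsY Y)]
    exact hg0
  have hsuppA : ∀ n, c n ≠ 0 → n ∈ A := by
    intro n hn
    by_contra h
    exact hn (by simp [hc, extZ, h])
  -- support is all of A
  have hsupp : ∀ n ∈ A, c n ≠ 0 := by
    by_contra h
    push_neg at h
    obtain ⟨u, huA, hu0⟩ := h
    set B := A.filter fun n => c n ≠ 0 with hB
    have hBsubA : B ⊆ A := Finset.filter_subset _ _
    have hBssub : B ⊂ A := Finset.ssubset_iff_subset_ne.2 ⟨hBsubA, fun h => by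
      have : u ∈ B := h ▸ huA
      rw [hB, Finset.mem_filter] at this
      exact this.2 hu0⟩
    have hi0A : (i0 : Fin N) ∈ A := i0.2
    have hci0 : c (i0 : Fin N) = g i0 := by simp [hc, extZ, i0.2]
    have hi0B : (i0 : Fin N) ∈ B := by
      rw [hB, Finset.mem_filter]
      exact ⟨hi0A, by rw [hci0]; exact hi0⟩
    have hBne : B.Nonempty := ⟨_, hi0B⟩
    have hli := h2 B hBssub hBne
    rw [Fintype.linearIndependent_iff] at hli
    have key : ∑ i : ↥B, c (i : Fin N) • (fun l => Y l (i : Fin N)) = 0 := by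
      have : extZ B (fun i => c (i : Fin N)) = c := by
        funext n
        by_cases hn : n ∈ B
        · simp [extZ, hn]
        · have : c n = 0 := by
            by_contra hcn
            exact hn (by rw [hB, Finset.mem_filter]; exact ⟨hsuppA n hcn, hcn⟩)
          simp [extZ, hn, this]
      have h4 := sum_extZ B (fun i => c (i : Fin N)) (colsY Y)
      rw [this] at h4
      show (∑ i : ↥B, c (i : Fin N) • colsY Y (i : Fin N)) = 0
      rw [← h4]
      exact sum_smul_eq_zero_iff.2 hdep
    have := hli (fun i => c (i : Fin N)) key ⟨(i0 : Fin N), hi0B⟩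
    rw [hci0] at this
    exact hi0 this
  -- A is closed
  have hcl : IsClosed' Y A := by
    intro l m n hm hn hmA
    obtain ⟨a, b, hab, hY⟩ := hrow l
    have hcab : c a = c b := by
      have := hdep l
      rw [rowsumZ hY] at this
      omega
    by_contra hnA
    have hcn : c n = 0 := by
      by_contra h
      exact hnA (hsuppA n h)
    have hcm : c m ≠ 0 := hsupp m hmA
    rcases (entry_ne hab hY).1 hm with rfl | rfl <;>
      rcases (entry_ne hab hY).1 hn with h2' | h2' <;>
      [skip; skip; skip; skip] <;>
      first
        | (exact hnA (h2' ▸ hmA))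
        | (exact hcm (by rw [h2'] at hcn; omega))
  refine ⟨hA, hcl, ?_⟩
  intro B hBA hBne hBneq hBcl
  obtain ⟨w, hw⟩ := hBne
  have hCCsub : CC Y w ⊆ B := CC_subset_of_closed hBcl hw
  have hCCssub : CC Y w ⊂ A := Finset.ssubset_iff_subset_ne.2
    ⟨hCCsub.trans hBA, fun h => hBneq (subset_antisymm hBA (h ▸ hCCsub))⟩
  have hli := h2 (CC Y w) hCCssub ⟨w, mem_CC.2 (rRel_refl Y w)⟩
  rw [Fintype.linearIndependent_iff] at hli
  have hsum : ∑ i : ↥(CC Y w), (1 : ℤ) • (fun l => Y l (i : Fin N)) = 0 := by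
    have h5 : ∑ i : ↥(CC Y w), (fun l => Y l (i : Fin N)) = 0 := by
      show (∑ i : ↥(CC Y w), colsY Y (i : Fin N)) = 0
      rw [Finset.sum_coe_sort (CC Y w) (colsY Y)]
      exact sum_CC_cols hrow w
    simpa using h5
  have := hli (fun _ => 1) hsum ⟨w, mem_CC.2 (rRel_refl Y w)⟩
  exact one_ne_zero this

private noncomputable def rSetoid (Y : Matrix (Fin L) (Fin N) ℤ) : Setoid (Fin N) :=
  Relation.EqvGen.setoid (eRel Y)

private lemma rSetoid_r {Y : Matrix (Fin L) (Fin N) ℤ} {v w : Fin N} :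
    (rSetoid Y).r v w ↔ rRel Y v w := Iff.rfl

private lemma card_minC_eq (Y : Matrix (Fin L) (Fin N) ℤ) :
    Nat.card {A : Finset (Fin N) // MinC Y A} = Fintype.card (Quotient (rSetoid Y)) := by
  let F : Quotient (rSetoid Y) → {A : Finset (Fin N) // MinC Y A} :=
    Quotient.lift (fun v => ⟨CC Y v, minC_CC Y v⟩)
      (fun v w h => Subtype.ext (CC_eq_of_rRel h))
  have hbij : Function.Bijective F := by
    constructor
    · intro q1 q2 h
      induction q1 using Quotient.inductionOn with | h v =>
      induction q2 using Quotient.inductionOn with | h w =>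
      have hcc : CC Y v = CC Y w := congrArg Subtype.val h
      have : rRel Y v w := mem_CC.1 (hcc ▸ mem_CC.2 (rRel_refl Y w))
      exact Quotient.sound this
    · rintro ⟨A, hA⟩
      obtain ⟨v, hv, rfl⟩ := minC_iff_CC.1 hA
      exact ⟨Quotient.mk _ v, rfl⟩
  rw [Nat.card_congr (Equiv.ofBijective F hbij).symm, Nat.card_eq_fintype_card]

private noncomputable def liftMap (Y : Matrix (Fin L) (Fin N) ℤ) :
    (Quotient (rSetoid Y) → ℚ) →ₗ[ℚ] (Fin N → ℚ) where
  toFun f := fun n => f (Quotient.mk _ n)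
  map_add' f g := rfl
  map_smul' a f := rfl

private lemma liftMap_inj (Y : Matrix (Fin L) (Fin N) ℤ) :
    Function.Injective (liftMap Y) := by
  intro f g h
  funext q
  induction q using Quotient.inductionOn with | h v =>
  exact congrFun h v

private lemma liftMap_range
    (hrow : ∀ l, ∃ m n : Fin N, m ≠ n ∧
      Y l = (Pi.single m 1 : Fin N → ℤ) - Pi.single n 1) :
    LinearMap.range (liftMap Y)
      = LinearMap.ker (Y.map (Int.cast : ℤ → ℚ)).mulVecLin := by
  ext c
  simp only [LinearMap.mem_range, LinearMap.mem_ker]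
  have hker : (Y.map (Int.cast : ℤ → ℚ)).mulVecLin c = 0
      ↔ ∀ l, ∑ n, (Y l n : ℚ) * c n = 0 := by
    rw [Matrix.mulVecLin_apply, funext_iff]
    refine forall_congr' fun l => ?_
    simp [Matrix.mulVec, dotProduct, Matrix.map_apply]
  rw [hker]
  constructor
  · rintro ⟨f, rfl⟩ l
    obtain ⟨a, b, hab, hY⟩ := hrow l
    rw [rowsumQ hY]
    have hq : Quotient.mk (rSetoid Y) a = Quotient.mk (rSetoid Y) b :=
      Quotient.sound (Relation.EqvGen.rel _ _
        ⟨l, (entry_ne hab hY).2 (Or.inl rfl), (entry_ne hab hY).2 (Or.inr rfl)⟩)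
    show f (Quotient.mk (rSetoid Y) a) - f (Quotient.mk (rSetoid Y) b) = 0
    rw [hq, sub_self]
  · intro h
    have hconst : ∀ v w, rRel Y v w → c v = c w := by
      intro v w hvw
      refine const_on_rRel hrow (fun l a b hab hY => ?_) hvw
      have := h l
      rw [rowsumQ hY] at this
      linarith
    refine ⟨Quotient.lift c hconst, ?_⟩
    funext n
    rfl

private lemma rank_add_card
    (hrow : ∀ l, ∃ m n : Fin N, m ≠ n ∧
      Y l = (Pi.single m 1 : Fin N → ℤ) - Pi.single n 1) :
    (Y.map (Int.cast : ℤ → ℚ)).rank + Nat.card {A : Finset (Fin N) // MinC Y A} = N := by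
  have h2 := LinearMap.finrank_range_add_finrank_ker (Y.map (Int.cast : ℤ → ℚ)).mulVecLin
  have h3 : Module.finrank ℚ (Fin N → ℚ) = N := by
    rw [Module.finrank_pi, Fintype.card_fin]
  have h4 : Module.finrank ℚ ↥(LinearMap.ker (Y.map (Int.cast : ℤ → ℚ)).mulVecLin)
      = Fintype.card (Quotient (rSetoid Y)) := by
    rw [← liftMap_range hrow,
      ← LinearEquiv.finrank_eq (LinearEquiv.ofInjective (liftMap Y) (liftMap_inj Y)),
      Module.finrank_pi]
  have h5 : (Y.map (Int.cast : ℤ → ℚ)).rank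
      = Module.finrank ℚ ↥(LinearMap.range (Y.map (Int.cast : ℤ → ℚ)).mulVecLin) := rfl
  rw [card_minC_eq, h5, ← h4]
  rw [h3] at h2
  exact h2

end SchAux


/-- In the setting of the previous statement, a nonempty `A` is minimal in `P` iff the
subgroup of `ℤ^L` generated by the columns `{yₙ : n ∈ A}` has rank `|A| − 1` and every
proper nonempty subcollection is linearly independent.  Moreover the number `r` of
minimal sets satisfies `N − L ≤ r`, with equality when `rank Y = L`. -/
theorem stmt16 (N L : ℕ) (Y : Matrix (Fin L) (Fin N) ℤ)
    (hrow : ∀ l, ∃ m n : Fin N, m ≠ n ∧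
      Y l = (Pi.single m 1 : Fin N → ℤ) - Pi.single n 1)
    (hcol : ∀ n, (fun l => Y l n) ≠ 0) :
    let S : Fin L → Finset (Fin N) := fun l => Finset.univ.filter fun n => Y l n ≠ 0
    let η : Finset (Fin N) → Finset (Fin N) :=
      fun A => Finset.univ.biUnion fun l => if (S l ∩ A).Nonempty then S l else ∅
    let Minimal : Finset (Fin N) → Prop := fun A =>
      A.Nonempty ∧ η A = A ∧ ∀ B ⊆ A, B.Nonempty → B ≠ A → η B ≠ B
    (∀ A : Finset (Fin N), A.Nonempty →
      (Minimal A ↔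
        (Module.finrank ℤ
            ↥(Submodule.span ℤ ((fun n => fun l => Y l n) '' (A : Set (Fin N))))
          = A.card - 1 ∧
        ∀ B ⊂ A, B.Nonempty →
          LinearIndependent ℤ (fun n : ↥B => fun l => Y l (n : Fin N))))) ∧
    N - L ≤ Nat.card {A : Finset (Fin N) // Minimal A} ∧
    ((Y.map (Int.cast : ℤ → ℚ)).rank = L →
      N - L = Nat.card {A : Finset (Fin N) // Minimal A}) := by
  intro S η Minimal
  have hclosed : ∀ A : Finset (Fin N), η A = A ↔ IsClosed' Y A := by
    intro A
    constructor
    · intro h l m n hm hn hmA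
      have hSl : S l ⊆ A := by
        rw [← h]
        intro x hx
        refine Finset.mem_biUnion.2 ⟨l, Finset.mem_univ l, ?_⟩
        rw [if_pos ⟨m, Finset.mem_inter.2
          ⟨Finset.mem_filter.2 ⟨Finset.mem_univ m, hm⟩, hmA⟩⟩]
        exact hx
      exact hSl (Finset.mem_filter.2 ⟨Finset.mem_univ n, hn⟩)
    · intro h
      apply subset_antisymm
      · intro x hx
        obtain ⟨l, -, hxl⟩ := Finset.mem_biUnion.1 hx
        by_cases hcase : ((S l) ∩ A).Nonempty
        · rw [if_pos hcase] at hxl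
          obtain ⟨m, hm⟩ := hcase
          rw [Finset.mem_inter] at hm
          exact h l m x (Finset.mem_filter.1 hm.1).2 (Finset.mem_filter.1 hxl).2 hm.2
        · rw [if_neg hcase] at hxl
          exact absurd hxl (Finset.notMem_empty x)
      · intro x hx
        obtain ⟨l, hl⟩ := Function.ne_iff.1 (hcol x)
        have hxS : x ∈ S l := Finset.mem_filter.2 ⟨Finset.mem_univ x, hl⟩
        refine Finset.mem_biUnion.2 ⟨l, Finset.mem_univ l, ?_⟩
        rw [if_pos ⟨x, Finset.mem_inter.2 ⟨hxS, hx⟩⟩]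
        exact hxS
  have hMinIff : ∀ A : Finset (Fin N), Minimal A ↔ MinC Y A := by
    intro A
    constructor
    · rintro ⟨h1, h2, h3⟩
      exact ⟨h1, (hclosed A).1 h2,
        fun B hB hBne hne hcl => h3 B hB hBne hne ((hclosed B).2 hcl)⟩
    · rintro ⟨h1, h2, h3⟩
      exact ⟨h1, (hclosed A).2 h2,
        fun B hB hBne hne heta => h3 B hB hBne hne ((hclosed B).1 heta)⟩
  have hcard : Nat.card {A : Finset (Fin N) // Minimal A}
      = Nat.card {A : Finset (Fin N) // MinC Y A} :=
    Nat.card_congr (Equiv.subtypeEquivRight hMinIff)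
  have hrk := rank_add_card (Y := Y) hrow
  have hle : (Y.map (Int.cast : ℤ → ℚ)).rank ≤ L := by
    have := Matrix.rank_le_card_height (Y.map (Int.cast : ℤ → ℚ))
    simpa using this
  refine ⟨?_, ?_, ?_⟩
  · intro A hA
    rw [hMinIff A]
    constructor
    · intro hm
      obtain ⟨v, hv, rfl⟩ := minC_iff_CC.1 hm
      exact ⟨finrank_CC hrow hcol v, fun B hB hBne =>
        indep_of_ssub_CC hrow (Finset.ssubset_iff_subset_ne.1 hB).1
          (Finset.ssubset_iff_subset_ne.1 hB).2⟩
    · rintro ⟨h1, h2⟩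
      exact minC_of_rank hrow hA h1 h2
  · rw [hcard]; omega
  · intro hrank; rw [hcard]; omega
end
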